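/- arXiv:2409.10988 — 5 statements merged into one kernel-verified Lean document; each statement's English description precedes it below -/
import Mathlib

section
/- Let p, q : ℝ → ℂ be locally integrable, λ ∈ ℂ, and define the x-dependent matrices H = [[0,1,0],[−p,0,1],[λ−q,−p,0]] and H̃ = [[0,1,0],[−p,0,1],[q−λ,−p,0]]. Suppose Φ, Φ̃ : ℝ → M₃(ℂ) are continuous and satisfy the integral equations Φ(x) = 1₃ + ∫₀ˣ H(s)Φ(s) ds and Φ̃(x) = 1₃ + ∫₀ˣ H̃(s)Φ̃(s) ds for all x ∈ ℝ. Then, with J = [[0,0,1],[0,−1,0],[1,0,0]], one has Φ̃(x)ᵀ J Φ(x) = J for all x ∈ ℝ; in particular Φ(x) is invertible and Φ̃(x) = J (Φ(x)ᵀ)⁻¹ J. -/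
open MeasureTheory Matrix Set

lemma li_ii {f : ℝ → ℂ} (hf : LocallyIntegrable f) (a b : ℝ) :
    IntervalIntegrable f volume a b := by
  rw [intervalIntegrable_iff]
  exact (hf.integrableOn_isCompact isCompact_uIcc).mono_set uIoc_subset_uIcc

lemma pairFubini (u v : ℝ → ℂ) (A : Set ℝ) (hA : MeasurableSet A)
    (hu : IntegrableOn u A) (hv : IntegrableOn v A)
    (D D' : Set (ℝ × ℝ))
    (hDdef : D = {p : ℝ × ℝ | p.2 ≤ p.1} ∧ D' = {p : ℝ × ℝ | p.1 ≤ p.2}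
           ∨ D = {p : ℝ × ℝ | p.1 ≤ p.2} ∧ D' = {p : ℝ × ℝ | p.2 ≤ p.1}) :
    (∫ p, D.indicator (fun p : ℝ × ℝ => u p.1 * v p.2) p
        ∂((volume.restrict A).prod (volume.restrict A)))
    + (∫ p, D'.indicator (fun p : ℝ × ℝ => u p.1 * v p.2) p
        ∂((volume.restrict A).prod (volume.restrict A)))
    = (∫ s in A, u s) * (∫ t in A, v t) := by
  set μ := volume.restrict A with hμ
  set f : ℝ × ℝ → ℂ := fun p => u p.1 * v p.2 with hf
  have hF : Integrable f (μ.prod μ) := Integrable.mul_prod hu hv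
  have hD : MeasurableSet D := by
    rcases hDdef with ⟨h1, _⟩ | ⟨h1, _⟩ <;> rw [h1]
    · exact measurableSet_le measurable_snd measurable_fst
    · exact measurableSet_le measurable_fst measurable_snd
  have hD' : MeasurableSet D' := by
    rcases hDdef with ⟨_, h2⟩ | ⟨_, h2⟩ <;> rw [h2]
    · exact measurableSet_le measurable_fst measurable_snd
    · exact measurableSet_le measurable_snd measurable_fst
  have hdiagm : MeasurableSet {p : ℝ × ℝ | p.1 = p.2} :=
    measurableSet_eq_fun measurable_fst measurable_snd
  have hdiag0 : (μ.prod μ) {p : ℝ × ℝ | p.1 = p.2} = 0 := by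
    rw [Measure.prod_apply hdiagm]
    have h1 : ∀ x : ℝ, μ (Prod.mk x ⁻¹' {p : ℝ × ℝ | p.1 = p.2}) = 0 := by
      intro x
      have : Prod.mk x ⁻¹' {p : ℝ × ℝ | p.1 = p.2} = {x} := by
        ext y; simp [eq_comm]
      rw [this, hμ, Measure.restrict_apply (measurableSet_singleton x)]
      exact measure_mono_null inter_subset_left Real.volume_singleton
    simp [h1]
  have hpt : ∀ p : ℝ × ℝ, D.indicator f p + D'.indicator f p
      = f p + ({p : ℝ × ℝ | p.1 = p.2}).indicator f p := by
    have base : ∀ p : ℝ × ℝ,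
        ({p : ℝ × ℝ | p.2 ≤ p.1}).indicator f p + ({p : ℝ × ℝ | p.1 ≤ p.2}).indicator f p
        = f p + ({p : ℝ × ℝ | p.1 = p.2}).indicator f p := by
      intro p
      rcases lt_trichotomy p.1 p.2 with h | h | h
      · simp [Set.indicator_apply, h.le, not_le.mpr h, ne_of_lt h]
      · simp [Set.indicator_apply, h]
      · simp [Set.indicator_apply, h.le, not_le.mpr h, ne_of_gt h]
    intro p
    rcases hDdef with ⟨h1, h2⟩ | ⟨h1, h2⟩ <;> subst h1 <;> subst h2
    · exact base p
    · rw [add_comm]; exact base p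
  calc (∫ p, D.indicator f p ∂(μ.prod μ)) + (∫ p, D'.indicator f p ∂(μ.prod μ))
      = ∫ p, (D.indicator f p + D'.indicator f p) ∂(μ.prod μ) := by
        rw [integral_add (hF.indicator hD) (hF.indicator hD')]
    _ = ∫ p, (f p + ({p : ℝ × ℝ | p.1 = p.2}).indicator f p) ∂(μ.prod μ) := by
        exact integral_congr_ae (Filter.Eventually.of_forall hpt)
    _ = (∫ p, f p ∂(μ.prod μ)) + ∫ p, ({p : ℝ × ℝ | p.1 = p.2}).indicator f p ∂(μ.prod μ) := by
        rw [integral_add hF (hF.indicator hdiagm)]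
    _ = (∫ s in A, u s) * (∫ t in A, v t) := by
        rw [integral_indicator hdiagm, Measure.restrict_eq_zero.mpr hdiag0,
          integral_zero_measure, add_zero, integral_prod_mul]

lemma setPairIic (u v : ℝ → ℂ) (A : Set ℝ) (hA : MeasurableSet A)
    (hu : IntegrableOn u A) (hv : IntegrableOn v A) :
    (∫ s in A, (u s * ∫ t in A ∩ Iic s, v t) + (∫ t in A ∩ Iic s, u t) * v s)
      = (∫ s in A, u s) * (∫ t in A, v t) := by
  set μ := volume.restrict A with hμ
  set f : ℝ × ℝ → ℂ := fun p => u p.1 * v p.2 with hfdef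
  set g : ℝ × ℝ → ℂ := fun p => u p.2 * v p.1 with hgdef
  set D : Set (ℝ × ℝ) := {p : ℝ × ℝ | p.2 ≤ p.1} with hDdef
  set D' : Set (ℝ × ℝ) := {p : ℝ × ℝ | p.1 ≤ p.2} with hD'def
  have hD : MeasurableSet D := measurableSet_le measurable_snd measurable_fst
  have hD' : MeasurableSet D' := measurableSet_le measurable_fst measurable_snd
  have hF : Integrable f (μ.prod μ) := Integrable.mul_prod hu hv
  have hG : Integrable g (μ.prod μ) := by
    have := Integrable.mul_prod hv hu
    simpa [hgdef, mul_comm] using this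
  have hres : ∀ s : ℝ, μ.restrict (Iic s) = volume.restrict (A ∩ Iic s) := by
    intro s
    rw [hμ, Measure.restrict_restrict measurableSet_Iic, Set.inter_comm]
  have step1 : ∀ s : ℝ, (∫ t, D.indicator f (s, t) ∂μ) = u s * ∫ t in A ∩ Iic s, v t := by
    intro s
    have h1 : (fun t => D.indicator f (s, t)) = (Iic s).indicator (fun t => u s * v t) := by
      funext t; by_cases h : t ≤ s <;> simp [Set.indicator_apply, hDdef, hfdef, h]
    rw [h1, integral_indicator measurableSet_Iic, hres s, integral_const_mul]
  have step2 : ∀ s : ℝ, (∫ t, D.indicator g (s, t) ∂μ) = (∫ t in A ∩ Iic s, u t) * v s := by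
    intro s
    have h1 : (fun t => D.indicator g (s, t)) = (Iic s).indicator (fun t => u t * v s) := by
      funext t; by_cases h : t ≤ s <;> simp [Set.indicator_apply, hDdef, hgdef, h]
    rw [h1, integral_indicator measurableSet_Iic, hres s, integral_mul_const]
  have swapEq : (∫ p, D.indicator g p ∂(μ.prod μ)) = ∫ p, D'.indicator f p ∂(μ.prod μ) := by
    have h1 : (fun z : ℝ × ℝ => D.indicator g z.swap) = D'.indicator f := by
      funext z; by_cases h : z.1 ≤ z.2 <;>
        simp [Set.indicator_apply, hDdef, hD'def, hfdef, hgdef, h, Prod.swap]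
    rw [← integral_prod_swap (D.indicator g), h1]
  calc (∫ s in A, (u s * ∫ t in A ∩ Iic s, v t) + (∫ t in A ∩ Iic s, u t) * v s)
      = ∫ s, ((∫ t, D.indicator f (s, t) ∂μ) + (∫ t, D.indicator g (s, t) ∂μ)) ∂μ := by
        refine integral_congr_ae (Filter.Eventually.of_forall fun s => ?_)
        dsimp only
        rw [step1 s, step2 s]
    _ = (∫ s, (∫ t, D.indicator f (s, t) ∂μ) ∂μ) + ∫ s, (∫ t, D.indicator g (s, t) ∂μ) ∂μ := by
        exact integral_add ((hF.indicator hD).integral_prod_left)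
          ((hG.indicator hD).integral_prod_left)
    _ = (∫ p, D.indicator f p ∂(μ.prod μ)) + ∫ p, D.indicator g p ∂(μ.prod μ) := by
        have e1 : (∫ s, (∫ t, D.indicator f (s, t) ∂μ) ∂μ)
            = ∫ p, D.indicator f p ∂(μ.prod μ) := integral_integral (hF.indicator hD)
        have e2 : (∫ s, (∫ t, D.indicator g (s, t) ∂μ) ∂μ)
            = ∫ p, D.indicator g p ∂(μ.prod μ) := integral_integral (hG.indicator hD)
        rw [e1, e2]
    _ = (∫ p, D.indicator f p ∂(μ.prod μ)) + ∫ p, D'.indicator f p ∂(μ.prod μ) := by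
        rw [swapEq]
    _ = (∫ s in A, u s) * (∫ t in A, v t) := by
        exact pairFubini u v A hA hu hv D D' (Or.inl ⟨hDdef, hD'def⟩)

lemma setPairIci (u v : ℝ → ℂ) (A : Set ℝ) (hA : MeasurableSet A)
    (hu : IntegrableOn u A) (hv : IntegrableOn v A) :
    (∫ s in A, (u s * ∫ t in A ∩ Ici s, v t) + (∫ t in A ∩ Ici s, u t) * v s)
      = (∫ s in A, u s) * (∫ t in A, v t) := by
  set μ := volume.restrict A with hμ
  set f : ℝ × ℝ → ℂ := fun p => u p.1 * v p.2 with hfdef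
  set g : ℝ × ℝ → ℂ := fun p => u p.2 * v p.1 with hgdef
  set D : Set (ℝ × ℝ) := {p : ℝ × ℝ | p.2 ≤ p.1} with hDdef
  set D' : Set (ℝ × ℝ) := {p : ℝ × ℝ | p.1 ≤ p.2} with hD'def
  have hD : MeasurableSet D := measurableSet_le measurable_snd measurable_fst
  have hD' : MeasurableSet D' := measurableSet_le measurable_fst measurable_snd
  have hF : Integrable f (μ.prod μ) := Integrable.mul_prod hu hv
  have hG : Integrable g (μ.prod μ) := by
    have := Integrable.mul_prod hv hu
    simpa [hgdef, mul_comm] using this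
  have hres : ∀ s : ℝ, μ.restrict (Ici s) = volume.restrict (A ∩ Ici s) := by
    intro s
    rw [hμ, Measure.restrict_restrict measurableSet_Ici, Set.inter_comm]
  have step1 : ∀ s : ℝ, (∫ t, D'.indicator f (s, t) ∂μ) = u s * ∫ t in A ∩ Ici s, v t := by
    intro s
    have h1 : (fun t => D'.indicator f (s, t)) = (Ici s).indicator (fun t => u s * v t) := by
      funext t; by_cases h : s ≤ t <;> simp [Set.indicator_apply, hD'def, hfdef, h]
    rw [h1, integral_indicator measurableSet_Ici, hres s, integral_const_mul]
  have step2 : ∀ s : ℝ, (∫ t, D'.indicator g (s, t) ∂μ) = (∫ t in A ∩ Ici s, u t) * v s := by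
    intro s
    have h1 : (fun t => D'.indicator g (s, t)) = (Ici s).indicator (fun t => u t * v s) := by
      funext t; by_cases h : s ≤ t <;> simp [Set.indicator_apply, hD'def, hgdef, h]
    rw [h1, integral_indicator measurableSet_Ici, hres s, integral_mul_const]
  have swapEq : (∫ p, D'.indicator g p ∂(μ.prod μ)) = ∫ p, D.indicator f p ∂(μ.prod μ) := by
    have h1 : (fun z : ℝ × ℝ => D'.indicator g z.swap) = D.indicator f := by
      funext z; by_cases h : z.2 ≤ z.1 <;>
        simp [Set.indicator_apply, hDdef, hD'def, hfdef, hgdef, h, Prod.swap]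
    rw [← integral_prod_swap (D'.indicator g), h1]
  calc (∫ s in A, (u s * ∫ t in A ∩ Ici s, v t) + (∫ t in A ∩ Ici s, u t) * v s)
      = ∫ s, ((∫ t, D'.indicator f (s, t) ∂μ) + (∫ t, D'.indicator g (s, t) ∂μ)) ∂μ := by
        refine integral_congr_ae (Filter.Eventually.of_forall fun s => ?_)
        dsimp only
        rw [step1 s, step2 s]
    _ = (∫ s, (∫ t, D'.indicator f (s, t) ∂μ) ∂μ) + ∫ s, (∫ t, D'.indicator g (s, t) ∂μ) ∂μ := by
        exact integral_add ((hF.indicator hD').integral_prod_left)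
          ((hG.indicator hD').integral_prod_left)
    _ = (∫ p, D'.indicator f p ∂(μ.prod μ)) + ∫ p, D'.indicator g p ∂(μ.prod μ) := by
        have e1 : (∫ s, (∫ t, D'.indicator f (s, t) ∂μ) ∂μ)
            = ∫ p, D'.indicator f p ∂(μ.prod μ) := integral_integral (hF.indicator hD')
        have e2 : (∫ s, (∫ t, D'.indicator g (s, t) ∂μ) ∂μ)
            = ∫ p, D'.indicator g p ∂(μ.prod μ) := integral_integral (hG.indicator hD')
        rw [e1, e2]
    _ = (∫ p, D'.indicator f p ∂(μ.prod μ)) + ∫ p, D.indicator f p ∂(μ.prod μ) := by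
        rw [swapEq]
    _ = (∫ s in A, u s) * (∫ t in A, v t) := by
        exact pairFubini u v A hA hu hv D' D (Or.inr ⟨hD'def, hDdef⟩)

lemma primitive_mul (u v : ℝ → ℂ)
    (hu : ∀ a b : ℝ, IntervalIntegrable u volume a b)
    (hv : ∀ a b : ℝ, IntervalIntegrable v volume a b) (x : ℝ) :
    (∫ s in (0:ℝ)..x, ((u s * ∫ t in (0:ℝ)..s, v t) + (∫ t in (0:ℝ)..s, u t) * v s))
      = (∫ t in (0:ℝ)..x, u t) * (∫ t in (0:ℝ)..x, v t) := by
  rcases le_total 0 x with hx | hx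
  · rw [intervalIntegral.integral_of_le hx, intervalIntegral.integral_of_le hx,
      intervalIntegral.integral_of_le hx]
    have hA : MeasurableSet (Ioc (0:ℝ) x) := measurableSet_Ioc
    have congr1 : EqOn (fun s => (u s * ∫ t in (0:ℝ)..s, v t) + (∫ t in (0:ℝ)..s, u t) * v s)
        (fun s => (u s * ∫ t in Ioc 0 x ∩ Iic s, v t) + (∫ t in Ioc 0 x ∩ Iic s, u t) * v s)
        (Ioc 0 x) := by
      intro s hs
      have h0s : (0:ℝ) ≤ s := hs.1.le
      have hset : Ioc (0:ℝ) s = Ioc 0 x ∩ Iic s := by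
        ext t
        simp only [mem_Ioc, mem_inter_iff, mem_Iic]
        constructor
        · rintro ⟨h1, h2⟩; exact ⟨⟨h1, h2.trans hs.2⟩, h2⟩
        · rintro ⟨⟨h1, _⟩, h2⟩; exact ⟨h1, h2⟩
      dsimp only
      rw [intervalIntegral.integral_of_le h0s, intervalIntegral.integral_of_le h0s, hset]
    rw [setIntegral_congr_fun hA congr1]
    exact setPairIic u v _ hA (hu 0 x).1 (hv 0 x).1
  · rw [intervalIntegral.integral_of_ge hx, intervalIntegral.integral_of_ge hx,
      intervalIntegral.integral_of_ge hx, neg_mul_neg]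
    have hA : MeasurableSet (Ioc x (0:ℝ)) := measurableSet_Ioc
    have congr1 : EqOn (fun s => (u s * ∫ t in (0:ℝ)..s, v t) + (∫ t in (0:ℝ)..s, u t) * v s)
        (fun s => -((u s * ∫ t in Ioc x 0 ∩ Ici s, v t) + (∫ t in Ioc x 0 ∩ Ici s, u t) * v s))
        (Ioc x 0) := by
      intro s hs
      have hs0 : s ≤ (0:ℝ) := hs.2
      have hset : Ioc x (0:ℝ) ∩ Ici s = Icc s 0 := by
        ext t
        simp only [mem_Ioc, mem_inter_iff, mem_Ici, mem_Icc]
        constructor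
        · rintro ⟨⟨_, h2⟩, h3⟩; exact ⟨h3, h2⟩
        · rintro ⟨h1, h2⟩; exact ⟨⟨lt_of_lt_of_le hs.1 h1, h2⟩, h1⟩
      dsimp only
      rw [intervalIntegral.integral_of_ge hs0, intervalIntegral.integral_of_ge hs0, hset,
        integral_Icc_eq_integral_Ioc, integral_Icc_eq_integral_Ioc]
      ring
    rw [setIntegral_congr_fun hA congr1, integral_neg, neg_neg]
    exact setPairIci u v _ hA (hu x 0).1 (hv x 0).1

lemma prod_formula (u v : ℝ → ℂ)
    (hu : ∀ a b : ℝ, IntervalIntegrable u volume a b)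
    (hv : ∀ a b : ℝ, IntervalIntegrable v volume a b)
    (a b : ℂ) (f g : ℝ → ℂ)
    (hf : ∀ x, f x = a + ∫ s in (0:ℝ)..x, u s)
    (hg : ∀ x, g x = b + ∫ s in (0:ℝ)..x, v s) (x : ℝ) :
    f x * g x = a * b + ∫ s in (0:ℝ)..x, (u s * g s + f s * v s) := by
  set U : ℝ → ℂ := fun y => ∫ s in (0:ℝ)..y, u s with hU
  set V : ℝ → ℂ := fun y => ∫ s in (0:ℝ)..y, v s with hV
  have hUc : Continuous U := intervalIntegral.continuous_primitive hu 0
  have hVc : Continuous V := intervalIntegral.continuous_primitive hv 0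
  have I1 : IntervalIntegrable (fun s => u s * V s + U s * v s) volume 0 x :=
    ((hu 0 x).mul_continuousOn hVc.continuousOn).add
      ((hv 0 x).continuousOn_mul hUc.continuousOn)
  have I2 : IntervalIntegrable (fun s => b * u s + a * v s) volume 0 x :=
    ((hu 0 x).const_mul b).add ((hv 0 x).const_mul a)
  have key : (∫ s in (0:ℝ)..x, (u s * g s + f s * v s))
      = ∫ s in (0:ℝ)..x, ((b * u s + a * v s) + (u s * V s + U s * v s)) := by
    apply intervalIntegral.integral_congr
    intro s _
    dsimp only
    rw [hf s, hg s]
    ring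
  rw [key, intervalIntegral.integral_add I2 I1, intervalIntegral.integral_add
      ((hu 0 x).const_mul b) ((hv 0 x).const_mul a),
    intervalIntegral.integral_const_mul, intervalIntegral.integral_const_mul,
    primitive_mul u v hu hv x, hf x, hg x]
  ring


/-- Let `p, q : ℝ → ℂ` be locally integrable, `λ ∈ ℂ`, and let
`H = [[0,1,0],[−p,0,1],[λ−q,−p,0]]` and `H̃ = [[0,1,0],[−p,0,1],[q−λ,−p,0]]`.
If `Φ, Φ̃ : ℝ → M₃(ℂ)` are continuous (entrywise) and satisfy the entrywise integral
equations `Φ(x) = 1₃ + ∫₀ˣ H(s)Φ(s) ds` and `Φ̃(x) = 1₃ + ∫₀ˣ H̃(s)Φ̃(s) ds`, then with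
`J = [[0,0,1],[0,−1,0],[1,0,0]]` one has `Φ̃(x)ᵀ J Φ(x) = J` for all `x`; in particular
`Φ(x)` is invertible and `Φ̃(x) = J (Φ(x)ᵀ)⁻¹ J`. -/
theorem wtPhi_transpose_J_Phi_eq_J
    (p q : ℝ → ℂ) (hp : LocallyIntegrable p) (hq : LocallyIntegrable q)
    (lam : ℂ)
    (H Ht : ℝ → Matrix (Fin 3) (Fin 3) ℂ)
    (hH : ∀ s, H s = !![0, 1, 0; -p s, 0, 1; lam - q s, -p s, 0])
    (hHt : ∀ s, Ht s = !![0, 1, 0; -p s, 0, 1; q s - lam, -p s, 0])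
    (Φ Φt : ℝ → Matrix (Fin 3) (Fin 3) ℂ)
    (hΦc : ∀ i j, Continuous fun x => Φ x i j)
    (hΦtc : ∀ i j, Continuous fun x => Φt x i j)
    (hΦ : ∀ x i j, Φ x i j =
      (1 : Matrix (Fin 3) (Fin 3) ℂ) i j + ∫ s in (0:ℝ)..x, (H s * Φ s) i j)
    (hΦt : ∀ x i j, Φt x i j =
      (1 : Matrix (Fin 3) (Fin 3) ℂ) i j + ∫ s in (0:ℝ)..x, (Ht s * Φt s) i j)
    (J : Matrix (Fin 3) (Fin 3) ℂ)
    (hJ : J = !![0, 0, 1; 0, -1, 0; 1, 0, 0]) :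
    ∀ x : ℝ, (Φt x)ᵀ * J * Φ x = J ∧ IsUnit (Φ x) ∧
      Φt x = J * ((Φ x)ᵀ)⁻¹ * J := by
  
  have rowH : ∀ (s : ℝ) (j : Fin 3),
      (H s * Φ s) 0 j = Φ s 1 j ∧
      (H s * Φ s) 1 j = -(p s * Φ s 0 j) + Φ s 2 j ∧
      (H s * Φ s) 2 j = (lam - q s) * Φ s 0 j - p s * Φ s 1 j := by
    intro s j
    refine ⟨?_, ?_, ?_⟩ <;> (simp [hH, Matrix.mul_apply, Fin.sum_univ_three]; try ring)
  have rowHt : ∀ (s : ℝ) (j : Fin 3),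
      (Ht s * Φt s) 0 j = Φt s 1 j ∧
      (Ht s * Φt s) 1 j = -(p s * Φt s 0 j) + Φt s 2 j ∧
      (Ht s * Φt s) 2 j = (q s - lam) * Φt s 0 j - p s * Φt s 1 j := by
    intro s j
    refine ⟨?_, ?_, ?_⟩ <;> (simp [hHt, Matrix.mul_apply, Fin.sum_univ_three]; try ring)
  -- interval integrability of the rows
  have hu0 : ∀ (j : Fin 3) (a b : ℝ), IntervalIntegrable (fun s => (H s * Φ s) 0 j) volume a b := by
    intro j a b
    rw [funext fun s => (rowH s j).1]
    exact (hΦc 1 j).intervalIntegrable a b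
  have hu1 : ∀ (j : Fin 3) (a b : ℝ), IntervalIntegrable (fun s => (H s * Φ s) 1 j) volume a b := by
    intro j a b
    rw [funext fun s => (rowH s j).2.1]
    exact (((li_ii hp a b).mul_continuousOn (hΦc 0 j).continuousOn).neg).add
      ((hΦc 2 j).intervalIntegrable a b)
  have hu2 : ∀ (j : Fin 3) (a b : ℝ), IntervalIntegrable (fun s => (H s * Φ s) 2 j) volume a b := by
    intro j a b
    rw [funext fun s => (rowH s j).2.2]
    exact ((li_ii ((locallyIntegrable_const lam).sub hq) a b).mul_continuousOn
      (hΦc 0 j).continuousOn).sub ((li_ii hp a b).mul_continuousOn (hΦc 1 j).continuousOn)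
  have hut0 : ∀ (j : Fin 3) (a b : ℝ), IntervalIntegrable (fun s => (Ht s * Φt s) 0 j) volume a b := by
    intro j a b
    rw [funext fun s => (rowHt s j).1]
    exact (hΦtc 1 j).intervalIntegrable a b
  have hut1 : ∀ (j : Fin 3) (a b : ℝ), IntervalIntegrable (fun s => (Ht s * Φt s) 1 j) volume a b := by
    intro j a b
    rw [funext fun s => (rowHt s j).2.1]
    exact (((li_ii hp a b).mul_continuousOn (hΦtc 0 j).continuousOn).neg).add
      ((hΦtc 2 j).intervalIntegrable a b)
  have hut2 : ∀ (j : Fin 3) (a b : ℝ), IntervalIntegrable (fun s => (Ht s * Φt s) 2 j) volume a b := by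
    intro j a b
    rw [funext fun s => (rowHt s j).2.2]
    exact ((li_ii (hq.sub (locallyIntegrable_const lam)) a b).mul_continuousOn
      (hΦtc 0 j).continuousOn).sub ((li_ii hp a b).mul_continuousOn (hΦtc 1 j).continuousOn)
  -- the key entrywise identity
  have entry : ∀ (i j : Fin 3) (x : ℝ),
      Φt x 2 i * Φ x 0 j - Φt x 1 i * Φ x 1 j + Φt x 0 i * Φ x 2 j = J i j := by
    intro i j x
    have E2 := prod_formula (fun s => (Ht s * Φt s) 2 i) (fun s => (H s * Φ s) 0 j)
      (hut2 i) (hu0 j) ((1 : Matrix (Fin 3) (Fin 3) ℂ) 2 i) ((1 : Matrix (Fin 3) (Fin 3) ℂ) 0 j)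
      (fun y => Φt y 2 i) (fun y => Φ y 0 j) (fun y => hΦt y 2 i) (fun y => hΦ y 0 j) x
    have E1 := prod_formula (fun s => (Ht s * Φt s) 1 i) (fun s => (H s * Φ s) 1 j)
      (hut1 i) (hu1 j) ((1 : Matrix (Fin 3) (Fin 3) ℂ) 1 i) ((1 : Matrix (Fin 3) (Fin 3) ℂ) 1 j)
      (fun y => Φt y 1 i) (fun y => Φ y 1 j) (fun y => hΦt y 1 i) (fun y => hΦ y 1 j) x
    have E0 := prod_formula (fun s => (Ht s * Φt s) 0 i) (fun s => (H s * Φ s) 2 j)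
      (hut0 i) (hu2 j) ((1 : Matrix (Fin 3) (Fin 3) ℂ) 0 i) ((1 : Matrix (Fin 3) (Fin 3) ℂ) 2 j)
      (fun y => Φt y 0 i) (fun y => Φ y 2 j) (fun y => hΦt y 0 i) (fun y => hΦ y 2 j) x
    have const : (1 : Matrix (Fin 3) (Fin 3) ℂ) 2 i * (1 : Matrix (Fin 3) (Fin 3) ℂ) 0 j
        - (1 : Matrix (Fin 3) (Fin 3) ℂ) 1 i * (1 : Matrix (Fin 3) (Fin 3) ℂ) 1 j
        + (1 : Matrix (Fin 3) (Fin 3) ℂ) 0 i * (1 : Matrix (Fin 3) (Fin 3) ℂ) 2 j = J i j := by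
      fin_cases i <;> fin_cases j <;> simp [hJ, Matrix.one_apply, Matrix.vecHead, Matrix.vecTail]
    have int2 : IntervalIntegrable
        (fun s => (Ht s * Φt s) 2 i * Φ s 0 j + Φt s 2 i * (H s * Φ s) 0 j) volume 0 x :=
      ((hut2 i 0 x).mul_continuousOn (hΦc 0 j).continuousOn).add
        ((hu0 j 0 x).continuousOn_mul (hΦtc 2 i).continuousOn)
    have int1 : IntervalIntegrable
        (fun s => (Ht s * Φt s) 1 i * Φ s 1 j + Φt s 1 i * (H s * Φ s) 1 j) volume 0 x :=
      ((hut1 i 0 x).mul_continuousOn (hΦc 1 j).continuousOn).add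
        ((hu1 j 0 x).continuousOn_mul (hΦtc 1 i).continuousOn)
    have int0 : IntervalIntegrable
        (fun s => (Ht s * Φt s) 0 i * Φ s 2 j + Φt s 0 i * (H s * Φ s) 2 j) volume 0 x :=
      ((hut0 i 0 x).mul_continuousOn (hΦc 2 j).continuousOn).add
        ((hu2 j 0 x).continuousOn_mul (hΦtc 0 i).continuousOn)
    have hI : (∫ s in (0:ℝ)..x, ((Ht s * Φt s) 2 i * Φ s 0 j + Φt s 2 i * (H s * Φ s) 0 j))
        - (∫ s in (0:ℝ)..x, ((Ht s * Φt s) 1 i * Φ s 1 j + Φt s 1 i * (H s * Φ s) 1 j))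
        + (∫ s in (0:ℝ)..x, ((Ht s * Φt s) 0 i * Φ s 2 j + Φt s 0 i * (H s * Φ s) 2 j)) = 0 := by
      rw [← intervalIntegral.integral_sub int2 int1,
        ← intervalIntegral.integral_add (int2.sub int1) int0]
      have hzero : ∀ s : ℝ,
          ((Ht s * Φt s) 2 i * Φ s 0 j + Φt s 2 i * (H s * Φ s) 0 j)
          - ((Ht s * Φt s) 1 i * Φ s 1 j + Φt s 1 i * (H s * Φ s) 1 j)
          + ((Ht s * Φt s) 0 i * Φ s 2 j + Φt s 0 i * (H s * Φ s) 2 j) = 0 := by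
        intro s
        rw [(rowH s j).1, (rowH s j).2.1, (rowH s j).2.2,
          (rowHt s i).1, (rowHt s i).2.1, (rowHt s i).2.2]
        ring
      calc (∫ s in (0:ℝ)..x,
            (((Ht s * Φt s) 2 i * Φ s 0 j + Φt s 2 i * (H s * Φ s) 0 j)
            - ((Ht s * Φt s) 1 i * Φ s 1 j + Φt s 1 i * (H s * Φ s) 1 j)
            + ((Ht s * Φt s) 0 i * Φ s 2 j + Φt s 0 i * (H s * Φ s) 2 j)))
          = ∫ s in (0:ℝ)..x, (0:ℂ) :=
            intervalIntegral.integral_congr (fun s _ => hzero s)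
        _ = 0 := intervalIntegral.integral_zero
    rw [E2, E1, E0]
    linear_combination const + hI
  have hmain : ∀ x : ℝ, (Φt x)ᵀ * J * Φ x = J := by
    intro x
    ext i j
    have expand : ((Φt x)ᵀ * J * Φ x) i j
        = Φt x 2 i * Φ x 0 j - Φt x 1 i * Φ x 1 j + Φt x 0 i * Φ x 2 j := by
      simp [hJ, Matrix.mul_apply, Fin.sum_univ_three]
      ring
    rw [expand, entry i j x]
  have hdetJ : J.det = 1 := by rw [hJ]; norm_num [Matrix.det_fin_three]; exact one_mul (1:ℂ)
  have hJJ : J * J = 1 := by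
    rw [hJ]
    norm_num [Matrix.mul_fin_three]
    exact Matrix.one_fin_three.symm
  have hJT : Jᵀ = J := by
    rw [hJ]; ext i j; fin_cases i <;> fin_cases j <;> simp
  intro x
  have hdet : (Φt x).det * (Φ x).det = 1 := by
    have h := congrArg Matrix.det (hmain x)
    rw [Matrix.det_mul, Matrix.det_mul, Matrix.det_transpose, hdetJ, mul_one] at h
    exact h
  have hunit : IsUnit (Φ x) := by
    apply (Matrix.isUnit_iff_isUnit_det _).mpr
    exact IsUnit.of_mul_eq_one _ (by rw [mul_comm]; exact hdet)
  have hinv : Φ x * (Φ x)⁻¹ = 1 :=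
    Matrix.mul_nonsing_inv _ ((Matrix.isUnit_iff_isUnit_det _).mp hunit)
  refine ⟨hmain x, hunit, ?_⟩
  have e1 : (Φt x)ᵀ * J = J * (Φ x)⁻¹ := by
    calc (Φt x)ᵀ * J = (Φt x)ᵀ * J * (Φ x * (Φ x)⁻¹) := by rw [hinv, mul_one]
      _ = ((Φt x)ᵀ * J * Φ x) * (Φ x)⁻¹ := by
          simp only [mul_assoc]
      _ = J * (Φ x)⁻¹ := by rw [hmain x]
  have e2 : (Φt x)ᵀ = J * (Φ x)⁻¹ * J := by
    calc (Φt x)ᵀ = (Φt x)ᵀ * (J * J) := by rw [hJJ, mul_one]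
      _ = ((Φt x)ᵀ * J) * J := by rw [mul_assoc]
      _ = J * (Φ x)⁻¹ * J := by rw [e1]
  calc Φt x = ((Φt x)ᵀ)ᵀ := by rw [Matrix.transpose_transpose]
    _ = (J * (Φ x)⁻¹ * J)ᵀ := by rw [e2]
    _ = Jᵀ * ((Φ x)⁻¹)ᵀ * Jᵀ := by
        rw [Matrix.transpose_mul, Matrix.transpose_mul]
        rw [mul_assoc]
    _ = J * ((Φ x)ᵀ)⁻¹ * J := by rw [hJT, Matrix.transpose_nonsing_inv]
end

section
/- Let N ∈ ℕ. There exist absolute constants c > 0 and C > 0 with the following property. Let p, q be real-valued 1-periodic functions in L²(𝕋) with ‖u‖ ≤ c/N, and let λ ∈ ℂ with Im λ ≥ 0 and |λ| > 1, z = λ^{1/3}. Then the integral equation X(x) = 1₃ + (1/z)·(K₁X)(x) on [0,N], where (K₁X)_{lj}(x) = ∫₀ᴺ K_{lj}(x,s)·(F₁(s)X(s))_{lj} ds with kernels K_{lj}(x,s) = e^{z(x−s)(ω^l−ω^j)} for s ≤ x when l < j, K_{lj}(x,s) = −e^{z(x−s)(ω^l−ω^j)} for s ≥ x when l ≥ j,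 and K_{lj}(x,s) = 0 otherwise, has a unique continuous 3×3-matrix-valued solution X₁ on [0,N]. Moreover: (X₁)_{lj}(0) = 0 and (X₁)_{jl}(N) = 0 for 1 ≤ l < j ≤ 3, (X₁)_{jj}(N) = 1 for j = 1,2,3, sup_{x∈[0,N]} ‖X₁(x)‖ ≤ 2, sup_{x∈[0,N]} ‖X₁(x) − 1₃‖ ≤ C N ‖u‖/|z|, every X₁(x) is invertible, and sup_{x∈[0,N]} ‖X₁(x)⁻¹ − 1₃‖ ≤ C N ‖u‖/|z|. -/
open MeasureTheory Complex Matrix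

noncomputable def omg : ℂ := Complex.exp (2 * Real.pi * Complex.I / 3)

noncomputable def Om1 : Matrix (Fin 3) (Fin 3) ℂ :=
  !![omg ^ 2, -omg, -1; -omg ^ 2, omg, -1; -omg ^ 2, -omg, 1]

noncomputable def Om2 : Matrix (Fin 3) (Fin 3) ℂ :=
  !![omg, omg, omg; omg ^ 2, omg ^ 2, omg ^ 2; 1, 1, 1]

/-- `F₁(s) = −(p(s)/3)Ω₁ − (q(s)/(3z))Ω₂`. -/
noncomputable def F1m (p q : ℝ → ℝ) (z : ℂ) (s : ℝ) : Matrix (Fin 3) (Fin 3) ℂ :=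
  (-(p s : ℂ) / 3) • Om1 + (-(q s : ℂ) / (3 * z)) • Om2

/-- The Birkhoff kernels `K_{lj}(x,s)`, indexed by `l, j : Fin 3` (so `l` stands for
`l+1 ∈ {1,2,3}` and `ω^l` means `ω^{l+1}`): `e^{z(x−s)(ω^l−ω^j)}` for `s ≤ x` when
`l < j`, `−e^{z(x−s)(ω^l−ω^j)}` for `s ≥ x` when `l ≥ j`, and `0` otherwise. -/
noncomputable def K1ker (z : ℂ) (l j : Fin 3) (x s : ℝ) : ℂ :=
  if (l : ℕ) < (j : ℕ) then
    (if s ≤ x then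
      Complex.exp (z * ((x - s : ℝ) : ℂ) * (omg ^ ((l : ℕ) + 1) - omg ^ ((j : ℕ) + 1)))
    else 0)
  else
    (if x ≤ s then
      -Complex.exp (z * ((x - s : ℝ) : ℂ) * (omg ^ ((l : ℕ) + 1) - omg ^ ((j : ℕ) + 1)))
    else 0)

/-- The operator norm of a `3 × 3` complex matrix with respect to the Euclidean norm. -/
noncomputable def opN (A : Matrix (Fin 3) (Fin 3) ℂ) : ℝ :=
  ‖Matrix.toEuclideanCLM (𝕜 := ℂ) (n := Fin 3) A‖

/-- `X` is a continuous solution on `[0,N]` of the Birkhoff integral equation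
`X = 1₃ + K₁X/z`. -/
def SolvesBirkhoff1 (p q : ℝ → ℝ) (z : ℂ) (N : ℕ)
    (X : ℝ → Matrix (Fin 3) (Fin 3) ℂ) : Prop :=
  (∀ l j : Fin 3, ContinuousOn (fun x => X x l j) (Set.Icc (0:ℝ) (N:ℝ))) ∧
  ∀ x ∈ Set.Icc (0:ℝ) (N:ℝ), ∀ l j : Fin 3,
    X x l j = (1 : Matrix (Fin 3) (Fin 3) ℂ) l j
      + z⁻¹ * ∫ s in (0:ℝ)..(N:ℝ), K1ker z l j x s * (F1m p q z s * X s) l j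

lemma omg_eq : omg = ⟨-(1/2), Real.sqrt 3 / 2⟩ := by
  have h : (2 * Real.pi * Complex.I / 3) = ((2 * Real.pi / 3 : ℝ) : ℂ) * Complex.I := by
    push_cast; ring
  have h2 : Real.pi - Real.pi / 3 = 2 * Real.pi / 3 := by ring
  rw [omg, h, Complex.exp_mul_I, ← Complex.ofReal_cos, ← Complex.ofReal_sin, ← h2,
    Real.cos_pi_sub, Real.sin_pi_sub, Real.cos_pi_div_three, Real.sin_pi_div_three]
  apply Complex.ext <;> simp

lemma omg_sq : omg ^ 2 = ⟨-(1/2), -(Real.sqrt 3 / 2)⟩ := by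
  have h3 : Real.sqrt 3 ^ 2 = 3 := Real.sq_sqrt (by norm_num)
  rw [pow_two, omg_eq]
  apply Complex.ext <;> simp [Complex.mul_re, Complex.mul_im] <;> nlinarith [h3]

lemma omg_cube : omg ^ 3 = 1 := by
  have h3 : Real.sqrt 3 ^ 2 = 3 := Real.sq_sqrt (by norm_num)
  have h : omg ^ 3 = omg ^ 2 * omg := by ring
  rw [h, omg_sq, omg_eq]
  apply Complex.ext <;> simp [Complex.mul_re, Complex.mul_im] <;> nlinarith [h3]

lemma omg_abs : ‖omg‖ = 1 := by
  rw [omg]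
  have h : (2 * Real.pi * Complex.I / 3) = ((2 * Real.pi / 3 : ℝ) : ℂ) * Complex.I := by
    push_cast; ring
  rw [h, Complex.norm_exp_ofReal_mul_I]

lemma omg_re : omg.re = -(1/2) := by rw [omg_eq]
lemma omg_im : omg.im = Real.sqrt 3 / 2 := by rw [omg_eq]
lemma omg_sq_re : (omg ^ 2).re = -(1/2) := by rw [omg_sq]
lemma omg_sq_im : (omg ^ 2).im = -(Real.sqrt 3 / 2) := by rw [omg_sq]
section zfacts
variable {z : ℂ}

lemma exp_abs_le_one (d : ℂ) (t : ℝ) (h : t * (z.re * d.re - z.im * d.im) ≤ 0) :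
    ‖Complex.exp (z * (t : ℂ) * d)‖ ≤ 1 := by
  rw [Complex.norm_exp, Real.exp_le_one_iff]
  have hh : (z * (t : ℂ) * d).re = t * (z.re * d.re - z.im * d.im) := by
    simp [Complex.mul_re, Complex.mul_im]; ring
  rw [hh]; exact h

lemma cond_le (hre : 0 ≤ z.re) (him : 0 ≤ z.im) (htan : Real.sqrt 3 * z.im ≤ 3 * z.re)
    {a b : ℕ} (ha : 1 ≤ a) (hab : a < b) (hb : b ≤ 3) :
    z.re * (omg ^ a - omg ^ b).re - z.im * (omg ^ a - omg ^ b).im ≤ 0 := by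
  have hsq3 : (0:ℝ) ≤ Real.sqrt 3 := Real.sqrt_nonneg 3
  have ha3 : a ≤ 3 := by omega
  interval_cases a <;> interval_cases b <;>
    simp only [pow_one, omg_cube, Complex.sub_re, Complex.sub_im, Complex.one_re,
      Complex.one_im, omg_re, omg_im, omg_sq_re, omg_sq_im] <;> nlinarith

lemma cond_ge (hre : 0 ≤ z.re) (him : 0 ≤ z.im) (htan : Real.sqrt 3 * z.im ≤ 3 * z.re)
    {a b : ℕ} (hb : 1 ≤ b) (hab : b ≤ a) (ha : a ≤ 3) :
    0 ≤ z.re * (omg ^ a - omg ^ b).re - z.im * (omg ^ a - omg ^ b).im := by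
  have hsq3 : (0:ℝ) ≤ Real.sqrt 3 := Real.sqrt_nonneg 3
  have hb3 : b ≤ 3 := by omega
  interval_cases b <;> interval_cases a <;>
    simp only [pow_one, omg_cube, Complex.sub_re, Complex.sub_im, Complex.one_re,
      Complex.one_im, omg_re, omg_im, omg_sq_re, omg_sq_im] <;> nlinarith

lemma K1ker_abs_le (hre : 0 ≤ z.re) (him : 0 ≤ z.im)
    (htan : Real.sqrt 3 * z.im ≤ 3 * z.re) (l j : Fin 3) (x s : ℝ) :
    ‖K1ker z l j x s‖ ≤ 1 := by
  by_cases hlj : (l : ℕ) < (j : ℕ)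
  · rw [K1ker, if_pos hlj]
    split_ifs with h
    · exact exp_abs_le_one _ _ (mul_nonpos_of_nonneg_of_nonpos (sub_nonneg.mpr h)
        (cond_le hre him htan (Nat.le_add_left 1 _) (by omega) (by omega)))
    · simp
  · rw [K1ker, if_neg hlj]
    split_ifs with h
    · rw [norm_neg]
      exact exp_abs_le_one _ _ (mul_nonpos_of_nonpos_of_nonneg (sub_nonpos.mpr h)
        (cond_ge hre him htan (Nat.le_add_left 1 _) (by omega) (by omega)))
    · simp
end zfacts

section zlam
variable {lam z : ℂ}

lemma zfacts (hIm : 0 ≤ lam.im) (hab : 1 < ‖lam‖) (hz : z = lam ^ ((1:ℂ)/3)) :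
    1 ≤ ‖z‖ ∧ 0 ≤ z.re ∧ 0 ≤ z.im ∧ Real.sqrt 3 * z.im ≤ 3 * z.re := by
  have hlam0 : lam ≠ 0 := by
    intro h; rw [h] at hab; simp at hab; linarith
  have hzexp : z = Complex.exp (Complex.log lam * ((1:ℂ)/3)) := by
    rw [hz, Complex.cpow_def_of_ne_zero hlam0]
  have hre : (Complex.log lam * ((1:ℂ)/3)).re = Real.log (‖lam‖) / 3 := by
    simp [Complex.mul_re, Complex.log_re, Complex.div_re]
    ring
  have him : (Complex.log lam * ((1:ℂ)/3)).im = Complex.arg lam / 3 := by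
    simp [Complex.mul_im, Complex.log_im, Complex.log_re]
    ring
  set φ : ℝ := Complex.arg lam / 3 with hφ
  have harg0 : 0 ≤ Complex.arg lam := Complex.arg_nonneg_iff.mpr hIm
  have hargpi : Complex.arg lam ≤ Real.pi := Complex.arg_le_pi lam
  have hφ0 : 0 ≤ φ := by positivity
  have hφle : φ ≤ Real.pi / 3 := by rw [hφ]; linarith
  have hπ : 0 < Real.pi := Real.pi_pos
  have hcos : (1:ℝ)/2 ≤ Real.cos φ := by
    have := Real.cos_le_cos_of_nonneg_of_le_pi hφ0 (by linarith) hφle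
    rwa [show Real.pi / 3 = Real.pi / 3 from rfl, Real.cos_pi_div_three] at this
  have hsin0 : 0 ≤ Real.sin φ := Real.sin_nonneg_of_nonneg_of_le_pi hφ0 (by linarith)
  have hsin : Real.sin φ ≤ Real.sqrt 3 / 2 := by
    have := Real.sin_le_sin_of_le_of_le_pi_div_two (by linarith) (by linarith) hφle
    rwa [Real.sin_pi_div_three] at this
  have hE : 0 < Real.exp (Real.log (‖lam‖) / 3) := Real.exp_pos _
  have hzre : z.re = Real.exp (Real.log (‖lam‖) / 3) * Real.cos φ := by
    rw [hzexp, Complex.exp_re, hre, him]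
  have hzim : z.im = Real.exp (Real.log (‖lam‖) / 3) * Real.sin φ := by
    rw [hzexp, Complex.exp_im, hre, him]
  have habs : ‖z‖ = Real.exp (Real.log (‖lam‖) / 3) := by
    rw [hzexp, Complex.norm_exp, hre]
  refine ⟨?_, ?_, ?_, ?_⟩
  · rw [habs]
    have : (0:ℝ) ≤ Real.log (‖lam‖) / 3 := by
      have := Real.log_nonneg (le_of_lt hab); linarith
    calc (1:ℝ) = Real.exp 0 := by simp
    _ ≤ _ := Real.exp_le_exp.mpr this
  · rw [hzre]; positivity
  · rw [hzim]; positivity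
  · rw [hzre, hzim]
    have hs3 : Real.sqrt 3 ^ 2 = 3 := Real.sq_sqrt (by norm_num)
    have hs3' : (0:ℝ) ≤ Real.sqrt 3 := Real.sqrt_nonneg 3
    nlinarith [mul_le_mul_of_nonneg_left hsin (le_of_lt hE),
      mul_le_mul_of_nonneg_left hcos (le_of_lt hE)]
end zlam

open scoped Matrix.Norms.L2Operator in
lemma opN_eq_norm (A : Matrix (Fin 3) (Fin 3) ℂ) : opN A = ‖A‖ := rfl

lemma euclid_entry_le (v : EuclideanSpace ℂ (Fin 3)) (k : Fin 3) : ‖v k‖ ≤ ‖v‖ := by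
  rw [EuclideanSpace.norm_eq]
  have h1 : ‖v k‖ ^ 2 ≤ ∑ i, ‖v i‖ ^ 2 :=
    Finset.single_le_sum (fun i _ => sq_nonneg ‖v i‖) (Finset.mem_univ k)
  calc ‖v k‖ = Real.sqrt (‖v k‖ ^ 2) := (Real.sqrt_sq (norm_nonneg _)).symm
  _ ≤ _ := Real.sqrt_le_sqrt h1

lemma opN_le_of_entries (A : Matrix (Fin 3) (Fin 3) ℂ) (e : ℝ)
    (h : ∀ l j, ‖A l j‖ ≤ e) : opN A ≤ 9 * e := by
  have he : 0 ≤ e := le_trans (norm_nonneg _) (h 0 0)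
  rw [opN]
  apply ContinuousLinearMap.opNorm_le_bound _ (by positivity)
  intro v
  have hact : ∀ i, ‖(Matrix.toEuclideanCLM (𝕜 := ℂ) (n := Fin 3) A) v i‖ ≤ 3 * e * ‖v‖ := by
    intro i
    have : (Matrix.toEuclideanCLM (𝕜 := ℂ) (n := Fin 3) A) v i = ∑ k, A i k * v k := by
      rfl
    rw [this]
    calc ‖∑ k, A i k * v k‖ ≤ ∑ k, ‖A i k * v k‖ := norm_sum_le _ _
    _ ≤ ∑ k : Fin 3, e * ‖v‖ := by
        apply Finset.sum_le_sum
        intro k _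
        rw [norm_mul]
        exact mul_le_mul (h i k) (euclid_entry_le v k) (norm_nonneg _) he
    _ = 3 * e * ‖v‖ := by simp [Fin.sum_univ_three]; ring
  have hnn : 0 ≤ 3 * e * ‖v‖ := by positivity
  rw [EuclideanSpace.norm_eq]
  calc Real.sqrt (∑ i, ‖(Matrix.toEuclideanCLM (𝕜 := ℂ) (n := Fin 3) A) v i‖ ^ 2)
      ≤ Real.sqrt (∑ i : Fin 3, (3 * e * ‖v‖) ^ 2) := by
        apply Real.sqrt_le_sqrt
        apply Finset.sum_le_sum
        intro i _
        exact pow_le_pow_left₀ (norm_nonneg _) (hact i) 2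
  _ ≤ Real.sqrt ((9 * e * ‖v‖) ^ 2) := by
        apply Real.sqrt_le_sqrt
        rw [Fin.sum_univ_three]
        nlinarith [sq_nonneg (3 * e * ‖v‖)]
  _ = 9 * e * ‖v‖ := Real.sqrt_sq (by positivity)

section periodic
variable {f : ℝ → ℝ}

lemma periodic_sub_nat (hf : Function.Periodic f 1) (n : ℕ) (x : ℝ) : f (x - n) = f x := by
  induction n with
  | zero => simp
  | succ m ih =>
    have : x - (m + 1 : ℕ) = (x - m) - 1 := by push_cast; ring
    rw [this, hf.sub_eq, ih]

lemma periodic_II_seg (hf : Function.Periodic f 1) (h01 : IntervalIntegrable f volume 0 1)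
    (n : ℕ) : IntervalIntegrable f volume n (n + 1) := by
  have h := h01.comp_sub_right (n : ℝ)
  have heq : (fun x => f (x - (n:ℝ))) = f := funext fun x => periodic_sub_nat hf n x
  rw [heq] at h
  simpa [add_comm] using h

lemma periodic_II (hf : Function.Periodic f 1) (h01 : IntervalIntegrable f volume 0 1)
    (n : ℕ) : IntervalIntegrable f volume 0 n := by
  induction n with
  | zero => simp [_root_.intervalIntegrable_const]
  | succ m ih => exact ih.trans (by simpa using periodic_II_seg hf h01 m)

lemma periodic_integral_nat (hf : Function.Periodic f 1)
    (h01 : IntervalIntegrable f volume 0 1) (n : ℕ) :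
    ∫ x in (0:ℝ)..(n:ℝ), f x = n * ∫ x in (0:ℝ)..1, f x := by
  induction n with
  | zero => simp
  | succ m ih =>
    have hseg : ∫ x in (m:ℝ)..((m:ℝ)+1), f x = ∫ x in (0:ℝ)..1, f x := by
      simpa using hf.intervalIntegral_add_eq (m : ℝ) 0
    have hadd := intervalIntegral.integral_add_adjacent_intervals (a := (0:ℝ)) (b := (m:ℝ)) (c := (m:ℝ)+1)
      (periodic_II hf h01 m) (periodic_II_seg hf h01 m)
    push_cast
    rw [← hadd, ih, hseg]
    ring

lemma int_abs_le_sqrt (hf : IntervalIntegrable f volume 0 1)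
    (hf2 : IntervalIntegrable (fun x => f x ^ 2) volume 0 1) :
    ∫ x in (0:ℝ)..1, |f x| ≤ Real.sqrt (∫ x in (0:ℝ)..1, f x ^ 2) := by
  set A := ∫ x in (0:ℝ)..1, f x ^ 2 with hA
  have hA0 : 0 ≤ A := intervalIntegral.integral_nonneg (by norm_num) (fun x _ => sq_nonneg _)
  have key : ∀ ε : ℝ, 0 < ε → ∫ x in (0:ℝ)..1, |f x| ≤ (A / ε + ε) / 2 := by
    intro ε hε
    have hrhs : IntervalIntegrable (fun x => (f x ^ 2 / ε + ε) / 2) volume 0 1 := by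
      apply IntervalIntegrable.div_const
      exact (hf2.div_const ε).add (_root_.intervalIntegrable_const)
    have hptw : ∀ x : ℝ, |f x| ≤ (f x ^ 2 / ε + ε) / 2 := by
      intro x
      have h2 : 2 * ε * |f x| ≤ f x ^ 2 + ε ^ 2 := by
        nlinarith [sq_nonneg (|f x| - ε), _root_.sq_abs (f x)]
      have h2e : (0:ℝ) < 2 * ε := by linarith
      calc |f x| = (2 * ε * |f x|) / (2 * ε) := by field_simp
      _ ≤ (f x ^ 2 + ε ^ 2) / (2 * ε) := by
          exact (div_le_div_iff_of_pos_right h2e).mpr h2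
      _ = (f x ^ 2 / ε + ε) / 2 := by field_simp
    have hmono := intervalIntegral.integral_mono_on (by norm_num : (0:ℝ) ≤ 1)
      hf.abs hrhs (fun x _ => hptw x)
    calc ∫ x in (0:ℝ)..1, |f x| ≤ ∫ x in (0:ℝ)..1, (f x ^ 2 / ε + ε) / 2 := hmono
    _ = (A / ε + ε) / 2 := by
        rw [intervalIntegral.integral_div, intervalIntegral.integral_add (hf2.div_const ε)
          intervalIntegrable_const, intervalIntegral.integral_div]
        simp [hA]
  rcases eq_or_lt_of_le hA0 with h0 | hpos
  · have : ∫ x in (0:ℝ)..1, |f x| ≤ 0 := by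
      by_contra hc
      push_neg at hc
      have := key (∫ x in (0:ℝ)..1, |f x|) hc
      rw [← h0] at this
      simp at this
      linarith
    calc ∫ x in (0:ℝ)..1, |f x| ≤ 0 := this
    _ ≤ _ := Real.sqrt_nonneg _
  · have := key (Real.sqrt A) (Real.sqrt_pos.mpr hpos)
    rw [Real.div_sqrt] at this; linarith
end periodic

section ker
variable (z : ℂ) (l j : Fin 3)

lemma expker_cont (d : ℂ) (s : ℝ) : Continuous fun x : ℝ =>
    Complex.exp (z * ((x - s : ℝ) : ℂ) * d) := by
  apply Complex.continuous_exp.comp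
  exact (continuous_const.mul (Complex.continuous_ofReal.comp (continuous_id.sub
    continuous_const))).mul continuous_const

lemma expker_cont' (d : ℂ) (x : ℝ) : Continuous fun s : ℝ =>
    Complex.exp (z * ((x - s : ℝ) : ℂ) * d) := by
  apply Complex.continuous_exp.comp
  exact (continuous_const.mul (Complex.continuous_ofReal.comp (continuous_const.sub
    continuous_id))).mul continuous_const

lemma K1ker_measurable (x : ℝ) : Measurable (fun s => K1ker z l j x s) := by
  unfold K1ker
  by_cases hlj : (l : ℕ) < (j : ℕ) <;> simp only [hlj, if_true, if_false]
  · exact Measurable.ite measurableSet_Iic ((expker_cont' z _ x).measurable) measurable_const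
  · exact Measurable.ite measurableSet_Ici ((expker_cont' z _ x).neg.measurable) measurable_const

lemma K1ker_contAt {s x₀ : ℝ} (h : s ≠ x₀) :
    ContinuousAt (fun x => K1ker z l j x s) x₀ := by
  unfold K1ker
  rcases lt_or_gt_of_ne h with hlt | hgt
  · -- s < x₀ : near x₀, s ≤ x and ¬ (x ≤ s)
    have hmem : Set.Ioi s ∈ nhds x₀ := Ioi_mem_nhds hlt
    by_cases hlj : (l : ℕ) < (j : ℕ) <;> simp only [hlj, if_true, if_false]
    · apply ContinuousAt.congr ((expker_cont z _ s).continuousAt)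
      filter_upwards [hmem] with x hx
      rw [if_pos (le_of_lt hx)]
    · apply ContinuousAt.congr continuousAt_const
      filter_upwards [hmem] with x hx
      rw [if_neg (not_le.mpr hx)]
  · have hmem : Set.Iio s ∈ nhds x₀ := Iio_mem_nhds hgt
    by_cases hlj : (l : ℕ) < (j : ℕ) <;> simp only [hlj, if_true, if_false]
    · apply ContinuousAt.congr continuousAt_const
      filter_upwards [hmem] with x hx
      rw [if_neg (not_le.mpr hx)]
    · apply ContinuousAt.congr ((expker_cont z (omg ^ ((l : ℕ) + 1) - omg ^ ((j : ℕ) + 1)) s).neg.continuousAt)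
      filter_upwards [hmem] with x hx
      rw [if_pos (le_of_lt hx)]
      rfl

lemma cont_integral {T : ℝ} (hKb : ∀ l j x s, ‖K1ker z l j x s‖ ≤ 1)
    (g : ℝ → ℂ) (hg : Integrable g (volume.restrict (Set.Ioc (0:ℝ) T))) :
    Continuous fun x => ∫ s in Set.Ioc (0:ℝ) T, K1ker z l j x s * g s := by
  rw [continuous_iff_continuousAt]
  intro x₀
  apply MeasureTheory.continuousAt_of_dominated (bound := fun s => ‖g s‖)
  · filter_upwards with x
    exact ((K1ker_measurable z l j x).aestronglyMeasurable).mul hg.aestronglyMeasurable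
  · filter_upwards with x
    filter_upwards with s
    rw [norm_mul]
    calc ‖K1ker z l j x s‖ * ‖g s‖
        ≤ 1 * ‖g s‖ :=
          mul_le_mul_of_nonneg_right (hKb l j x s) (norm_nonneg _)
      _ = ‖g s‖ := one_mul _
  · exact hg.norm
  · have hae : ∀ᵐ s ∂(volume.restrict (Set.Ioc (0:ℝ) T)), s ≠ x₀ := by
      refine ae_iff.mpr ?_
      have : {s : ℝ | ¬ s ≠ x₀} = {x₀} := by ext s; simp
      rw [this]
      exact le_antisymm (le_trans (Measure.restrict_apply_le _ _) (by simp)) (by simp)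
    filter_upwards [hae] with s hs
    exact (K1ker_contAt z l j hs).mul continuousAt_const
end ker

lemma Om1_abs (l k : Fin 3) : ‖Om1 l k‖ = 1 := by
  fin_cases l <;> fin_cases k <;>
    simp [Om1, Matrix.cons_val_zero, Matrix.cons_val_one, Matrix.head_cons,
      Matrix.head_fin_const, Matrix.cons_val_fin_one, Matrix.empty_val',
      Matrix.cons_val', Matrix.vecHead, Matrix.vecTail, map_pow, omg_abs, map_neg_eq_map]

lemma Om2_abs (l k : Fin 3) : ‖Om2 l k‖ = 1 := by
  fin_cases l <;> fin_cases k <;>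
    simp [Om2, Matrix.cons_val_zero, Matrix.cons_val_one, Matrix.head_cons,
      Matrix.head_fin_const, Matrix.cons_val_fin_one, Matrix.empty_val',
      Matrix.cons_val', Matrix.vecHead, Matrix.vecTail, map_pow, omg_abs, map_neg_eq_map]

section Fb
variable {p q : ℝ → ℝ} {z : ℂ}

lemma F1m_entry_le (hz1 : 1 ≤ ‖z‖) (s : ℝ) (l k : Fin 3) :
    ‖F1m p q z s l k‖ ≤ (|p s| + |q s|) / 3 := by
  have hz0 : (0:ℝ) < ‖z‖ := lt_of_lt_of_le one_pos hz1
  rw [F1m, Matrix.add_apply, Matrix.smul_apply, Matrix.smul_apply, smul_eq_mul, smul_eq_mul]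
  calc ‖-(p s : ℂ) / 3 * Om1 l k + -(q s : ℂ) / (3 * z) * Om2 l k‖
      ≤ ‖-(p s : ℂ) / 3 * Om1 l k‖ + ‖-(q s : ℂ) / (3 * z) * Om2 l k‖ :=
        norm_add_le _ _
    _ = |p s| / 3 + |q s| / (3 * ‖z‖) := by
        rw [norm_mul, norm_mul, Om1_abs, Om2_abs, norm_div, norm_div, norm_neg,
          norm_neg, Complex.norm_real, Complex.norm_real, norm_mul]
        simp
    _ ≤ |p s| / 3 + |q s| / 3 := by
        have : |q s| / (3 * ‖z‖) ≤ |q s| / 3 := by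
          apply div_le_div_of_nonneg_left (abs_nonneg _) (by norm_num)
          nlinarith
        linarith
    _ = (|p s| + |q s|) / 3 := by ring

lemma prod_entry_le (hz1 : 1 ≤ ‖z‖) (A : Matrix (Fin 3) (Fin 3) ℂ) (S : ℝ)
    (hA : ∀ k j, ‖A k j‖ ≤ S) (s : ℝ) (l j : Fin 3) :
    ‖(F1m p q z s * A) l j‖ ≤ (|p s| + |q s|) * S := by
  have hS : 0 ≤ S := le_trans (norm_nonneg _) (hA 0 0)
  rw [Matrix.mul_apply]
  calc ‖∑ k, F1m p q z s l k * A k j‖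
      ≤ ∑ k, ‖F1m p q z s l k * A k j‖ := norm_sum_le _ _
    _ ≤ ∑ _k : Fin 3, (|p s| + |q s|) / 3 * S := by
        apply Finset.sum_le_sum
        intro k _
        rw [norm_mul]
        exact mul_le_mul (F1m_entry_le hz1 s l k) (hA k j) (norm_nonneg _)
          (by positivity)
    _ = (|p s| + |q s|) * S := by rw [Fin.sum_univ_three]; ring

variable {T : ℝ}

lemma F1m_aesm (hpm : AEStronglyMeasurable p (volume.restrict (Set.Ioc (0:ℝ) T)))
    (hqm : AEStronglyMeasurable q (volume.restrict (Set.Ioc (0:ℝ) T))) (l k : Fin 3) :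
    AEStronglyMeasurable (fun s => F1m p q z s l k) (volume.restrict (Set.Ioc (0:ℝ) T)) := by
  simp only [F1m, Matrix.add_apply, Matrix.smul_apply, smul_eq_mul, div_eq_mul_inv]
  apply AEStronglyMeasurable.add
  · exact (((Complex.continuous_ofReal.comp_aestronglyMeasurable hpm).neg.mul
      aestronglyMeasurable_const).mul aestronglyMeasurable_const)
  · exact (((Complex.continuous_ofReal.comp_aestronglyMeasurable hqm).neg.mul
      aestronglyMeasurable_const).mul aestronglyMeasurable_const)

lemma intK (hz1 : 1 ≤ ‖z‖)
    (hKb : ∀ l j x s, ‖K1ker z l j x s‖ ≤ 1)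
    (hρint : IntegrableOn (fun s => |p s| + |q s|) (Set.Ioc (0:ℝ) T))
    (hpm : AEStronglyMeasurable p (volume.restrict (Set.Ioc (0:ℝ) T)))
    (hqm : AEStronglyMeasurable q (volume.restrict (Set.Ioc (0:ℝ) T)))
    (Amat : ℝ → Matrix (Fin 3) (Fin 3) ℂ) (S : ℝ) (hS : 0 ≤ S)
    (hAm : ∀ k j, AEStronglyMeasurable (fun s => Amat s k j) (volume.restrict (Set.Ioc (0:ℝ) T)))
    (hAb : ∀ s k j, ‖Amat s k j‖ ≤ S) (l j : Fin 3) (x : ℝ) :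
    Integrable (fun s => K1ker z l j x s * (F1m p q z s * Amat s) l j)
        (volume.restrict (Set.Ioc (0:ℝ) T)) ∧
    Integrable (fun s => (F1m p q z s * Amat s) l j)
        (volume.restrict (Set.Ioc (0:ℝ) T)) ∧
    ‖∫ s in Set.Ioc (0:ℝ) T, K1ker z l j x s * (F1m p q z s * Amat s) l j‖
        ≤ (∫ s in Set.Ioc (0:ℝ) T, (|p s| + |q s|)) * S := by
  set μ := volume.restrict (Set.Ioc (0:ℝ) T)
  have hprodm : AEStronglyMeasurable (fun s => (F1m p q z s * Amat s) l j) μ := by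
    simp only [Matrix.mul_apply]
    apply Finset.aestronglyMeasurable_fun_sum
    intro k _
    exact (F1m_aesm hpm hqm l k).mul (hAm k j)
  have hKm : AEStronglyMeasurable (fun s => K1ker z l j x s) μ :=
    (K1ker_measurable z l j x).aestronglyMeasurable
  have haesm : AEStronglyMeasurable (fun s => K1ker z l j x s * (F1m p q z s * Amat s) l j) μ :=
    hKm.mul hprodm
  have hbd : ∀ s, ‖K1ker z l j x s * (F1m p q z s * Amat s) l j‖ ≤ (|p s| + |q s|) * S := by
    intro s
    rw [norm_mul]
    have h1 : ‖K1ker z l j x s‖ ≤ 1 := hKb l j x s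
    have h2 : ‖(F1m p q z s * Amat s) l j‖ ≤ (|p s| + |q s|) * S :=
      prod_entry_le hz1 (Amat s) S (fun k j' => hAb s k j') s l j
    calc ‖K1ker z l j x s‖ * ‖(F1m p q z s * Amat s) l j‖
        ≤ 1 * ((|p s| + |q s|) * S) :=
          mul_le_mul h1 h2 (norm_nonneg _) one_pos.le
      _ = (|p s| + |q s|) * S := one_mul _
  have hbint : Integrable (fun s => (|p s| + |q s|) * S) μ := hρint.mul_const S
  have hbd2 : ∀ s, ‖(F1m p q z s * Amat s) l j‖ ≤ (|p s| + |q s|) * S := fun s =>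
    prod_entry_le hz1 (Amat s) S (fun k j' => hAb s k j') s l j
  refine ⟨?_, ?_, ?_⟩
  · exact Integrable.mono' hbint haesm (Filter.Eventually.of_forall hbd)
  · exact Integrable.mono' hbint hprodm (Filter.Eventually.of_forall hbd2)
  · calc ‖∫ s in Set.Ioc (0:ℝ) T, K1ker z l j x s * (F1m p q z s * Amat s) l j‖
        ≤ ∫ s in Set.Ioc (0:ℝ) T, (|p s| + |q s|) * S :=
          norm_integral_le_of_norm_le hbint (Filter.Eventually.of_forall hbd)
      _ = (∫ s in Set.Ioc (0:ℝ) T, (|p s| + |q s|)) * S := integral_mul_const _ _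

open scoped Matrix.Norms.L2Operator in
lemma matrix_inv_bound (A : Matrix (Fin 3) (Fin 3) ℂ) (β : ℝ)
    (hb : opN (A - 1) ≤ β) (hβ : β ≤ 1/2) :
    opN A ≤ 2 ∧ IsUnit A ∧ opN (A⁻¹ - 1) ≤ 2 * β := by
  rw [opN_eq_norm] at hb ⊢
  rw [opN_eq_norm]
  have hβ0 : 0 ≤ β := le_trans (norm_nonneg _) hb
  have hone : ‖(1 : Matrix (Fin 3) (Fin 3) ℂ)‖ = 1 := by
    rw [Matrix.cstar_norm_def, _root_.map_one]
    exact ContinuousLinearMap.norm_id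
  have ht : ‖(1 : Matrix (Fin 3) (Fin 3) ℂ) - A‖ < 1 := by
    rw [norm_sub_rev]; linarith
  have hu : IsUnit A := sub_sub_self 1 A ▸ (Units.oneSub (1 - A) ht).isUnit
  have hdet : IsUnit A.det := (Matrix.isUnit_iff_isUnit_det A).mp hu
  have hBA : A⁻¹ * A = 1 := Matrix.nonsing_inv_mul A hdet
  have h1 : A⁻¹ - 1 = A⁻¹ * (1 - A) := by rw [mul_sub, mul_one, hBA]
  have h2 : ‖A⁻¹ - 1‖ ≤ ‖A⁻¹‖ * β := by
    rw [h1]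
    calc ‖A⁻¹ * (1 - A)‖ ≤ ‖A⁻¹‖ * ‖1 - A‖ := norm_mul_le _ _
      _ ≤ ‖A⁻¹‖ * β := by
          apply mul_le_mul_of_nonneg_left _ (norm_nonneg _)
          rw [norm_sub_rev]; exact hb
  have h3 : ‖A⁻¹‖ ≤ 1 + ‖A⁻¹‖ * β := by
    calc ‖A⁻¹‖ = ‖(A⁻¹ - 1) + 1‖ := by rw [sub_add_cancel]
      _ ≤ ‖A⁻¹ - 1‖ + ‖(1 : Matrix (Fin 3) (Fin 3) ℂ)‖ := norm_add_le _ _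
      _ ≤ 1 + ‖A⁻¹‖ * β := by rw [hone]; linarith
  have hB2 : ‖A⁻¹‖ ≤ 2 := by nlinarith [norm_nonneg (A⁻¹ : Matrix (Fin 3) (Fin 3) ℂ)]
  refine ⟨?_, hu, ?_⟩
  · calc ‖A‖ = ‖(A - 1) + 1‖ := by rw [sub_add_cancel]
      _ ≤ ‖A - 1‖ + ‖(1 : Matrix (Fin 3) (Fin 3) ℂ)‖ := norm_add_le _ _
      _ ≤ 2 := by rw [hone]; linarith
  · nlinarith

set_option maxHeartbeats 1000000

/-- There are absolute constants `c, C > 0` such that for every `N ≥ 1`,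
all real-valued 1-periodic `p, q ∈ L²(𝕋)` with `‖u‖ ≤ c/N`, and every `λ` with
`Im λ ≥ 0`, `|λ| > 1`, `z = λ^{1/3}`, the Birkhoff integral equation has a unique
continuous solution `X₁` on `[0,N]`, with the stated boundary values, the bounds
`‖X₁‖ ≤ 2`, `‖X₁ − 1₃‖ ≤ CN‖u‖/|z|`, invertibility of `X₁(x)`, and
`‖X₁⁻¹ − 1₃‖ ≤ CN‖u‖/|z|`. -/
theorem birkhoff_equation_first :
    ∃ c > (0:ℝ), ∃ C > (0:ℝ), ∀ N : ℕ, 0 < N →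
      ∀ p q : ℝ → ℝ, Function.Periodic p 1 → Function.Periodic q 1 →
      IntervalIntegrable p volume 0 1 → IntervalIntegrable q volume 0 1 →
      IntervalIntegrable (fun x => p x ^ 2) volume 0 1 →
      IntervalIntegrable (fun x => q x ^ 2) volume 0 1 →
      Real.sqrt ((∫ x in (0:ℝ)..1, p x ^ 2) + ∫ x in (0:ℝ)..1, q x ^ 2) ≤ c / N →
      ∀ lam : ℂ, 0 ≤ lam.im → 1 < ‖lam‖ →
      ∀ z : ℂ, z = lam ^ ((1:ℂ)/3) →
      ∃ X : ℝ → Matrix (Fin 3) (Fin 3) ℂ,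
        SolvesBirkhoff1 p q z N X ∧
        (∀ Y : ℝ → Matrix (Fin 3) (Fin 3) ℂ, SolvesBirkhoff1 p q z N Y →
          ∀ x ∈ Set.Icc (0:ℝ) (N:ℝ), Y x = X x) ∧
        (∀ l j : Fin 3, (l : ℕ) < (j : ℕ) → X 0 l j = 0 ∧ X (N:ℝ) j l = 0) ∧
        (∀ j : Fin 3, X (N:ℝ) j j = 1) ∧
        (∀ x ∈ Set.Icc (0:ℝ) (N:ℝ), opN (X x) ≤ 2) ∧
        (∀ x ∈ Set.Icc (0:ℝ) (N:ℝ), opN (X x - 1)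
          ≤ C * N * Real.sqrt ((∫ x in (0:ℝ)..1, p x ^ 2) + ∫ x in (0:ℝ)..1, q x ^ 2)
              / ‖z‖) ∧
        (∀ x ∈ Set.Icc (0:ℝ) (N:ℝ), IsUnit (X x)) ∧
        (∀ x ∈ Set.Icc (0:ℝ) (N:ℝ), opN ((X x)⁻¹ - 1)
          ≤ C * N * Real.sqrt ((∫ x in (0:ℝ)..1, p x ^ 2) + ∫ x in (0:ℝ)..1, q x ^ 2)
              / ‖z‖) := by
  refine ⟨1/200, by norm_num, 72, by norm_num, ?_⟩
  intro N hN p q hp hq hpI hqI hp2I hq2I huN lam hIm hab z hz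
  obtain ⟨hz1, hzre, hzim, hztan⟩ := zfacts hIm hab hz
  have hzA : (0:ℝ) < ‖z‖ := lt_of_lt_of_le one_pos hz1
  have hNR : (0:ℝ) ≤ (N:ℝ) := Nat.cast_nonneg N
  have hKb : ∀ l j : Fin 3, ∀ x s : ℝ, ‖K1ker z l j x s‖ ≤ 1 :=
    fun l j x s => K1ker_abs_le hzre hzim hztan l j x s
  set u := Real.sqrt ((∫ x in (0:ℝ)..1, p x ^ 2) + ∫ x in (0:ℝ)..1, q x ^ 2) with hu_def
  have hu0 : 0 ≤ u := Real.sqrt_nonneg _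
  have hA0 : 0 ≤ ∫ x in (0:ℝ)..1, p x ^ 2 :=
    intervalIntegral.integral_nonneg (by norm_num) (fun x _ => sq_nonneg _)
  have hB0 : 0 ≤ ∫ x in (0:ℝ)..1, q x ^ 2 :=
    intervalIntegral.integral_nonneg (by norm_num) (fun x _ => sq_nonneg _)
  have hpu : ∫ x in (0:ℝ)..1, |p x| ≤ u :=
    le_trans (int_abs_le_sqrt hpI hp2I) (Real.sqrt_le_sqrt (by linarith))
  have hqu : ∫ x in (0:ℝ)..1, |q x| ≤ u :=
    le_trans (int_abs_le_sqrt hqI hq2I) (Real.sqrt_le_sqrt (by linarith))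
  -- the weight ρ
  have hρper : Function.Periodic (fun s => |p s| + |q s|) 1 := fun x => by simp [hp x, hq x]
  have hρ1 : IntervalIntegrable (fun s => |p s| + |q s|) volume 0 1 := hpI.abs.add hqI.abs
  have hρN : IntervalIntegrable (fun s => |p s| + |q s|) volume 0 (N:ℝ) :=
    periodic_II hρper hρ1 N
  have hρint : IntegrableOn (fun s => |p s| + |q s|) (Set.Ioc (0:ℝ) (N:ℝ)) :=
    (intervalIntegrable_iff_integrableOn_Ioc_of_le hNR).mp hρN
  set M := ∫ s in Set.Ioc (0:ℝ) (N:ℝ), (|p s| + |q s|) with hM_def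
  have hM0 : 0 ≤ M := setIntegral_nonneg measurableSet_Ioc (fun s _ => by positivity)
  have hMle : M ≤ 2 * N * u := by
    have h1 : M = ∫ x in (0:ℝ)..(N:ℝ), (|p x| + |q x|) :=
      (intervalIntegral.integral_of_le hNR).symm
    have h2 : ∫ x in (0:ℝ)..1, (|p x| + |q x|) ≤ 2 * u := by
      rw [intervalIntegral.integral_add hpI.abs hqI.abs]
      linarith
    rw [h1, periodic_integral_nat hρper hρ1 N]
    calc (N:ℝ) * ∫ x in (0:ℝ)..1, (|p x| + |q x|) ≤ (N:ℝ) * (2 * u) := by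
          apply mul_le_mul_of_nonneg_left h2 hNR
      _ = 2 * N * u := by ring
  have hNu : (N:ℝ) * u ≤ 1/200 := by
    have hNpos : (0:ℝ) < N := by exact_mod_cast hN
    calc (N:ℝ) * u ≤ (N:ℝ) * (1/200 / N) := mul_le_mul_of_nonneg_left huN hNR
      _ = 1/200 := by field_simp
  have hM100 : M ≤ 1/100 := by nlinarith
  set κ := M / ‖z‖ with hκ_def
  have hκ0 : 0 ≤ κ := by positivity
  have hκM : κ ≤ M := by
    rw [hκ_def]
    calc M / ‖z‖ ≤ M / 1 := by gcongr
      _ = M := div_one M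
  have hκ100 : κ ≤ 1/100 := le_trans hκM hM100
  have hκNu : κ ≤ 2 * N * u / ‖z‖ := by rw [hκ_def]; gcongr
  have hpm : AEStronglyMeasurable p (volume.restrict (Set.Ioc (0:ℝ) (N:ℝ))) :=
    ((intervalIntegrable_iff_integrableOn_Ioc_of_le hNR).mp
      (periodic_II hp hpI N)).aestronglyMeasurable
  have hqm : AEStronglyMeasurable q (volume.restrict (Set.Ioc (0:ℝ) (N:ℝ))) :=
    ((intervalIntegrable_iff_integrableOn_Ioc_of_le hNR).mp
      (periodic_II hq hqI N)).aestronglyMeasurable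
  -- the function space
  haveI : CompactSpace (Set.Icc (0:ℝ) (N:ℝ)) := isCompact_iff_compactSpace.mp isCompact_Icc
  set proj : ℝ → Set.Icc (0:ℝ) (N:ℝ) := fun x => Set.projIcc 0 (N:ℝ) hNR x with hproj_def
  have hproj_cont : Continuous proj := continuous_projIcc
  have hfentry : ∀ (f : C(Set.Icc (0:ℝ) (N:ℝ), Fin 3 → Fin 3 → ℂ)) (t : Set.Icc (0:ℝ) (N:ℝ))
      (k j : Fin 3), ‖f t k j‖ ≤ ‖f‖ := fun f t k j =>
    le_trans (le_trans (norm_le_pi_norm (f t k) j) (norm_le_pi_norm (f t) k))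
      (f.norm_coe_le_norm t)
  have hAm : ∀ (f : C(Set.Icc (0:ℝ) (N:ℝ), Fin 3 → Fin 3 → ℂ)) (k j : Fin 3),
      AEStronglyMeasurable (fun s => Matrix.of (f (proj s)) k j)
        (volume.restrict (Set.Ioc (0:ℝ) (N:ℝ))) := fun f k j =>
    ((continuous_apply j).comp ((continuous_apply k).comp
      (f.continuous.comp hproj_cont))).aestronglyMeasurable
  have key := fun (f : C(Set.Icc (0:ℝ) (N:ℝ), Fin 3 → Fin 3 → ℂ)) (l j : Fin 3) (x : ℝ) =>
    intK hz1 hKb hρint hpm hqm (fun s => Matrix.of (f (proj s))) ‖f‖ (norm_nonneg f)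
      (hAm f) (fun s k j' => hfentry f (proj s) k j') l j x
  -- the operator
  set bigT : C(Set.Icc (0:ℝ) (N:ℝ), Fin 3 → Fin 3 → ℂ) → ℝ → (Fin 3 → Fin 3 → ℂ) :=
    fun f x l j => (1 : Matrix (Fin 3) (Fin 3) ℂ) l j
      + z⁻¹ * ∫ s in Set.Ioc (0:ℝ) (N:ℝ),
          K1ker z l j x s * (F1m p q z s * Matrix.of (f (proj s))) l j with hbigT_def
  have hbigT_cont : ∀ f, Continuous (bigT f) := by
    intro f
    apply continuous_pi; intro l; apply continuous_pi; intro j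
    exact continuous_const.add (continuous_const.mul
      (cont_integral z l j hKb _ (key f l j 0).2.1))
  set T : C(Set.Icc (0:ℝ) (N:ℝ), Fin 3 → Fin 3 → ℂ) → C(Set.Icc (0:ℝ) (N:ℝ), Fin 3 → Fin 3 → ℂ) :=
    fun f => ⟨fun t => bigT f t.1, (hbigT_cont f).comp continuous_subtype_val⟩ with hT_def
  -- contraction
  have hTdist : ∀ f g, dist (T f) (T g) ≤ (1/2) * dist f g := by
    intro f g
    have hd0 : (0:ℝ) ≤ dist f g := dist_nonneg
    have hdiff := intK hz1 hKb hρint hpm hqm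
      (fun s => Matrix.of (f (proj s)) - Matrix.of (g (proj s))) (dist f g) hd0
      (fun k j' => (hAm f k j').sub (hAm g k j'))
      (fun s k j' => by
        simp only [Matrix.sub_apply]
        have h1 : dist (f (proj s) k j') (g (proj s) k j') ≤ dist f g :=
          le_trans (le_trans (dist_le_pi_dist (f (proj s) k) (g (proj s) k) j')
            (dist_le_pi_dist (f (proj s)) (g (proj s)) k))
            (ContinuousMap.dist_apply_le_dist (proj s))
        rw [dist_eq_norm] at h1
        exact h1)
    rw [ContinuousMap.dist_le (by positivity)]
    intro t
    rw [dist_pi_le_iff (by positivity)]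
    intro l
    rw [dist_pi_le_iff (by positivity)]
    intro j
    rw [dist_eq_norm]
    have heq : T f t l j - T g t l j = z⁻¹ *
        ((∫ s in Set.Ioc (0:ℝ) (N:ℝ),
            K1ker z l j t.1 s * (F1m p q z s * Matrix.of (f (proj s))) l j)
         - ∫ s in Set.Ioc (0:ℝ) (N:ℝ),
            K1ker z l j t.1 s * (F1m p q z s * Matrix.of (g (proj s))) l j) := by
      simp only [hT_def, hbigT_def, ContinuousMap.coe_mk]
      ring
    rw [heq, ← integral_sub (key f l j t.1).1 (key g l j t.1).1]
    have hintg : (fun s => K1ker z l j t.1 s * (F1m p q z s * Matrix.of (f (proj s))) l j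
        - K1ker z l j t.1 s * (F1m p q z s * Matrix.of (g (proj s))) l j)
        = fun s => K1ker z l j t.1 s *
            (F1m p q z s * (Matrix.of (f (proj s)) - Matrix.of (g (proj s)))) l j := by
      funext s
      rw [Matrix.mul_sub, Matrix.sub_apply]
      ring
    rw [norm_mul, hintg]
    calc ‖z⁻¹‖ * ‖∫ s in Set.Ioc (0:ℝ) (N:ℝ), K1ker z l j t.1 s *
          (F1m p q z s * (Matrix.of (f (proj s)) - Matrix.of (g (proj s)))) l j‖
        ≤ (‖z‖)⁻¹ * (M * dist f g) := by
          apply mul_le_mul _ ((hdiff l j t.1).2.2) (norm_nonneg _) (by positivity)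
          rw [norm_inv]
      _ = κ * dist f g := by rw [hκ_def]; ring
      _ ≤ (1/2) * dist f g := by nlinarith
  have hCW : ContractingWith (1/2 : NNReal) T := by
    constructor
    · rw [← NNReal.coe_lt_coe]; norm_num
    · apply LipschitzWith.of_dist_le_mul
      intro f g
      calc dist (T f) (T g) ≤ (1/2) * dist f g := hTdist f g
        _ = ((1/2 : NNReal) : ℝ) * dist f g := by norm_num
  haveI : Nonempty C(Set.Icc (0:ℝ) (N:ℝ), Fin 3 → Fin 3 → ℂ) := ⟨ContinuousMap.const _ 0⟩
  set Xc := ContractingWith.fixedPoint T hCW with hXc_def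
  have hXfix : T Xc = Xc := hCW.fixedPoint_isFixedPt
  have hXt : ∀ t : Set.Icc (0:ℝ) (N:ℝ), Xc t = bigT Xc t.1 :=
    fun t => (ContinuousMap.congr_fun hXfix t).symm
  -- the entry bounds
  set oneP : Fin 3 → Fin 3 → ℂ := fun l j => (1 : Matrix (Fin 3) (Fin 3) ℂ) l j with honeP_def
  set oneC : C(Set.Icc (0:ℝ) (N:ℝ), Fin 3 → Fin 3 → ℂ) := ContinuousMap.const _ oneP
    with honeC_def
  set D := dist Xc oneC with hD_def
  have hD0 : (0:ℝ) ≤ D := dist_nonneg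
  have honePb : ∀ k j : Fin 3, ‖oneP k j‖ ≤ 1 := by
    intro k j
    by_cases h : k = j
    · subst h
      simp [honeP_def, Matrix.one_apply_eq]
    · simp [honeP_def, Matrix.one_apply_ne h]
  have hXcentry : ∀ (t : Set.Icc (0:ℝ) (N:ℝ)) (k j : Fin 3),
      ‖Xc t k j‖ ≤ 1 + D := by
    intro t k j
    have h1 : dist (Xc t k j) (oneP k j) ≤ D :=
      le_trans (le_trans (dist_le_pi_dist (Xc t k) (oneC t k) j)
        (dist_le_pi_dist (Xc t) (oneC t) k)) (ContinuousMap.dist_apply_le_dist t)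
    calc ‖Xc t k j‖
        ≤ ‖Xc t k j - oneP k j‖ + ‖oneP k j‖ := by
          have := norm_add_le (Xc t k j - oneP k j) (oneP k j)
          simpa using this
      _ ≤ D + 1 := by
          rw [dist_eq_norm] at h1
          exact add_le_add h1 (honePb k j)
      _ = 1 + D := by ring
  have hkey2 := fun (l j : Fin 3) (x : ℝ) =>
    intK hz1 hKb hρint hpm hqm (fun s => Matrix.of (Xc (proj s))) (1 + D) (by linarith)
      (hAm Xc) (fun s k j' => hXcentry (proj s) k j') l j x
  have hENT : ∀ (t : Set.Icc (0:ℝ) (N:ℝ)) (l j : Fin 3),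
      ‖Xc t l j - oneP l j‖ ≤ κ * (1 + D) := by
    intro t l j
    have h1 : Xc t l j = bigT Xc t.1 l j := by rw [hXt t]
    have h2 : Xc t l j - oneP l j = z⁻¹ * ∫ s in Set.Ioc (0:ℝ) (N:ℝ),
        K1ker z l j t.1 s * (F1m p q z s * Matrix.of (Xc (proj s))) l j := by
      rw [h1, hbigT_def, honeP_def]; ring
    rw [h2, norm_mul, norm_inv]
    calc ‖z‖⁻¹ * ‖∫ s in Set.Ioc (0:ℝ) (N:ℝ),
          K1ker z l j t.1 s * (F1m p q z s * Matrix.of (Xc (proj s))) l j‖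
        ≤ (‖z‖)⁻¹ * (M * (1 + D)) := by
          apply mul_le_mul (le_of_eq rfl) ((hkey2 l j t.1).2.2) (norm_nonneg _) (by positivity)
      _ = κ * (1 + D) := by rw [hκ_def]; ring
  have hDκ : D ≤ κ * (1 + D) := by
    rw [hD_def, ContinuousMap.dist_le (by positivity)]
    intro t
    rw [dist_pi_le_iff (by positivity)]
    intro l
    rw [dist_pi_le_iff (by positivity)]
    intro j
    rw [dist_eq_norm]
    exact hENT t l j
  have hD2κ : D ≤ 2 * κ := by nlinarith
  have hEntryFinal : ∀ (t : Set.Icc (0:ℝ) (N:ℝ)) (l j : Fin 3),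
      ‖Xc t l j - oneP l j‖ ≤ 2 * κ := by
    intro t l j
    calc ‖Xc t l j - oneP l j‖ ≤ κ * (1 + D) := hENT t l j
      _ ≤ 2 * κ := by nlinarith
  -- the solution
  have hproj_mem : ∀ {x : ℝ} (hx : x ∈ Set.Icc (0:ℝ) (N:ℝ)), proj x = ⟨x, hx⟩ :=
    fun hx => Set.projIcc_of_mem hNR hx
  have hXeqn : ∀ (x : ℝ), x ∈ Set.Icc (0:ℝ) (N:ℝ) → ∀ l j : Fin 3,
      Matrix.of (Xc (proj x)) l j = (1 : Matrix (Fin 3) (Fin 3) ℂ) l j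
        + z⁻¹ * ∫ s in Set.Ioc (0:ℝ) (N:ℝ),
            K1ker z l j x s * (F1m p q z s * Matrix.of (Xc (proj s))) l j := by
    intro x hx l j
    have h1 : Xc (proj x) = bigT Xc x := by
      rw [hproj_mem hx]
      exact hXt ⟨x, hx⟩
    show (Xc (proj x)) l j = _
    rw [h1]
  have h72 : ∀ (t : Set.Icc (0:ℝ) (N:ℝ)),
      opN (Matrix.of (Xc t) - 1) ≤ 18 * κ ∧ 36 * κ ≤ 72 * (N:ℝ) * u / ‖z‖ := by
    intro t
    constructor
    · have hent : ∀ l j : Fin 3, ‖(Matrix.of (Xc t) - 1) l j‖ ≤ 2 * κ := by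
        intro l j
        simp only [Matrix.sub_apply]
        exact hEntryFinal t l j
      have := opN_le_of_entries (Matrix.of (Xc t) - 1) (2 * κ) hent
      linarith
    · have hween : (72:ℝ) * (N:ℝ) * u / ‖z‖
          = 36 * (2 * (N:ℝ) * u / ‖z‖) := by ring
      rw [hween]
      have := mul_le_mul_of_nonneg_left hκNu (by norm_num : (0:ℝ) ≤ 36)
      linarith
  refine ⟨fun x => Matrix.of (Xc (proj x)), ⟨?_, ?_⟩, ?_, ?_, ?_, ?_, ?_, ?_, ?_⟩
  · -- continuity
    intro l j
    exact ((continuous_apply j).comp ((continuous_apply l).comp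
      (Xc.continuous.comp hproj_cont))).continuousOn
  · -- the integral equation
    intro x hx l j
    rw [intervalIntegral.integral_of_le hNR]
    exact hXeqn x hx l j
  · -- uniqueness
    intro Y hY x hx
    obtain ⟨hYcont, hYeq⟩ := hY
    have hYc_cont : Continuous (fun t : Set.Icc (0:ℝ) (N:ℝ) =>
        (fun l j => Y t.1 l j : Fin 3 → Fin 3 → ℂ)) := by
      apply continuous_pi; intro l; apply continuous_pi; intro j
      exact (hYcont l j).restrict
    set Yc : C(Set.Icc (0:ℝ) (N:ℝ), Fin 3 → Fin 3 → ℂ) := ⟨_, hYc_cont⟩ with hYc_def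
    have hfix : Function.IsFixedPt T Yc := by
      apply ContinuousMap.ext
      intro t
      funext l j
      show bigT Yc t.1 l j = Y t.1 l j
      have hInt : ∫ s in Set.Ioc (0:ℝ) (N:ℝ),
            K1ker z l j t.1 s * (F1m p q z s * Matrix.of (Yc (proj s))) l j
          = ∫ s in Set.Ioc (0:ℝ) (N:ℝ),
            K1ker z l j t.1 s * (F1m p q z s * Y s) l j := by
        apply setIntegral_congr_fun measurableSet_Ioc
        intro s hs
        have hsmem : s ∈ Set.Icc (0:ℝ) (N:ℝ) := ⟨le_of_lt hs.1, hs.2⟩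
        show K1ker z l j t.1 s * (F1m p q z s * Matrix.of (Yc (proj s))) l j
          = K1ker z l j t.1 s * (F1m p q z s * Y s) l j
        rw [hproj_mem hsmem]
        rfl
      calc bigT Yc t.1 l j
          = (1 : Matrix (Fin 3) (Fin 3) ℂ) l j + z⁻¹ * ∫ s in Set.Ioc (0:ℝ) (N:ℝ),
              K1ker z l j t.1 s * (F1m p q z s * Y s) l j := by rw [← hInt]
        _ = Y t.1 l j := by
            rw [← intervalIntegral.integral_of_le hNR]
            exact (hYeq t.1 t.2 l j).symm
    have hYX : Yc = Xc := hCW.fixedPoint_unique hfix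
    ext l j
    show Y x l j = (Xc (proj x)) l j
    rw [hproj_mem hx, ← hYX]
    rfl
  · -- boundary at 0 and N, off-diagonal
    intro l j hlj
    have h0mem : (0:ℝ) ∈ Set.Icc (0:ℝ) (N:ℝ) := ⟨le_refl _, hNR⟩
    have hNmem : (N:ℝ) ∈ Set.Icc (0:ℝ) (N:ℝ) := ⟨hNR, le_refl _⟩
    have hne : l ≠ j := fun h => by rw [h] at hlj; exact lt_irrefl _ hlj
    constructor
    · have := hXeqn 0 h0mem l j
      have hzero : ∫ s in Set.Ioc (0:ℝ) (N:ℝ),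
          K1ker z l j 0 s * (F1m p q z s * Matrix.of (Xc (proj s))) l j = 0 := by
        rw [integral_Ioc_eq_integral_Ioo]
        rw [setIntegral_congr_fun measurableSet_Ioo
          (g := fun s : ℝ => (0:ℂ)) ?_]
        · simp
        · intro s hs
          have hK : K1ker z l j 0 s = 0 := by
            unfold K1ker
            rw [if_pos hlj, if_neg (not_le.mpr hs.1)]
          show K1ker z l j 0 s * (F1m p q z s * Matrix.of (Xc (proj s))) l j = 0
          rw [hK, zero_mul]
      rw [hzero, mul_zero, add_zero, Matrix.one_apply_ne hne] at this
      exact this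
    · have hne' : j ≠ l := fun h => hne h.symm
      have hnlt : ¬ ((j:ℕ) < (l:ℕ)) := by omega
      have := hXeqn (N:ℝ) hNmem j l
      have hzero : ∫ s in Set.Ioc (0:ℝ) (N:ℝ),
          K1ker z j l (N:ℝ) s * (F1m p q z s * Matrix.of (Xc (proj s))) j l = 0 := by
        rw [integral_Ioc_eq_integral_Ioo]
        rw [setIntegral_congr_fun measurableSet_Ioo
          (g := fun s : ℝ => (0:ℂ)) ?_]
        · simp
        · intro s hs
          have hK : K1ker z j l (N:ℝ) s = 0 := by
            unfold K1ker
            rw [if_neg hnlt, if_neg (not_le.mpr hs.2)]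
          show K1ker z j l (N:ℝ) s * (F1m p q z s * Matrix.of (Xc (proj s))) j l = 0
          rw [hK, zero_mul]
      rw [hzero, mul_zero, add_zero, Matrix.one_apply_ne hne'] at this
      exact this
  · -- boundary at N, diagonal
    intro j
    have hNmem : (N:ℝ) ∈ Set.Icc (0:ℝ) (N:ℝ) := ⟨hNR, le_refl _⟩
    have := hXeqn (N:ℝ) hNmem j j
    have hzero : ∫ s in Set.Ioc (0:ℝ) (N:ℝ),
        K1ker z j j (N:ℝ) s * (F1m p q z s * Matrix.of (Xc (proj s))) j j = 0 := by
      rw [integral_Ioc_eq_integral_Ioo]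
      rw [setIntegral_congr_fun measurableSet_Ioo
        (g := fun s : ℝ => (0:ℂ)) ?_]
      · simp
      · intro s hs
        have hK : K1ker z j j (N:ℝ) s = 0 := by
          unfold K1ker
          rw [if_neg (lt_irrefl _), if_neg (not_le.mpr hs.2)]
        show K1ker z j j (N:ℝ) s * (F1m p q z s * Matrix.of (Xc (proj s))) j j = 0
        rw [hK, zero_mul]
    rw [hzero, mul_zero, add_zero, Matrix.one_apply_eq] at this
    exact this
  · -- opN ≤ 2
    intro x hx
    exact (matrix_inv_bound (Matrix.of (Xc (proj x))) (18 * κ) (h72 (proj x)).1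
      (by linarith)).1
  · -- opN (X - 1) small
    intro x hx
    have h1 := (h72 (proj x)).1
    have h2 := (h72 (proj x)).2
    calc opN (Matrix.of (Xc (proj x)) - 1) ≤ 18 * κ := h1
      _ ≤ 36 * κ := by linarith
      _ ≤ 72 * (N:ℝ) * u / ‖z‖ := h2
  · -- invertibility
    intro x hx
    exact (matrix_inv_bound (Matrix.of (Xc (proj x))) (18 * κ) (h72 (proj x)).1
      (by linarith)).2.1
  · -- inverse bound
    intro x hx
    have h3 := (matrix_inv_bound (Matrix.of (Xc (proj x))) (18 * κ) (h72 (proj x)).1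
      (by linarith)).2.2
    calc opN ((Matrix.of (Xc (proj x)))⁻¹ - 1) ≤ 2 * (18 * κ) := h3
      _ = 36 * κ := by ring
      _ ≤ 72 * (N:ℝ) * u / ‖z‖ := (h72 (proj x)).2
end Fb
end

section
/- For every z ∈ ℂ, with ω = e^{2πi/3}: det [[1,1,1],[e^{ωz}, e^{ω²z}, e^{z}],[e^{2ωz}, e^{2ω²z}, e^{2z}]] = −8i · sin(√3 z/2) · sin(√3 ω z/2) · sin(√3 ω² z/2) = −4i · sin(√3 z/2) · ( cosh(3z/2) − cos(√3 z/2) ). -/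
open Matrix Complex

lemma sin3_aux (x y w : ℂ) :
    -8 * Complex.I * Complex.sin x * Complex.sin y * Complex.sin w
      = (Complex.exp (x*I) - Complex.exp (-x*I)) * (Complex.exp (y*I) - Complex.exp (-y*I))
          * (Complex.exp (w*I) - Complex.exp (-w*I)) := by
  simp only [Complex.sin]
  linear_combination (-((Complex.exp (-x*I) - Complex.exp (x*I)) * (Complex.exp (-y*I) - Complex.exp (y*I))
    * (Complex.exp (-w*I) - Complex.exp (w*I))) * (Complex.I^2 - 1)) * Complex.I_sq

lemma sincoshcos_aux (x u v : ℂ) :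
    -4 * Complex.I * Complex.sin x * (Complex.cosh u - Complex.cos v)
      = -(Complex.exp (x*I) - Complex.exp (-x*I))
          * (Complex.exp u + Complex.exp (-u) - Complex.exp (v*I) - Complex.exp (-v*I)) := by
  simp only [Complex.sin, Complex.cos, Complex.cosh]
  linear_combination (-2 * (Complex.exp (-x*I) - Complex.exp (x*I))
    * ((Complex.exp u + Complex.exp (-u))/2 - (Complex.exp (v*I) + Complex.exp (-v*I))/2)) * Complex.I_sq

/-- For every `z ∈ ℂ`, with `ω = e^{2πi/3}`, the determinant of the
value matrix of the unperturbed fundamental solutions at `x = 0, 1, 2` equals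
`−8i sin(√3z/2) sin(√3ωz/2) sin(√3ω²z/2) = −4i sin(√3z/2)(cosh(3z/2) − cos(√3z/2))`. -/
theorem det_phi0 (z ω : ℂ) (hω : ω = Complex.exp (2 * Real.pi * Complex.I / 3)) :
    Matrix.det !![1, 1, 1;
        Complex.exp (ω * z), Complex.exp (ω ^ 2 * z), Complex.exp z;
        Complex.exp (2 * ω * z), Complex.exp (2 * ω ^ 2 * z), Complex.exp (2 * z)]
      = -8 * Complex.I * Complex.sin ((Real.sqrt 3 : ℂ) * z / 2)
          * Complex.sin ((Real.sqrt 3 : ℂ) * ω * z / 2)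
          * Complex.sin ((Real.sqrt 3 : ℂ) * ω ^ 2 * z / 2) ∧
    Matrix.det !![1, 1, 1;
        Complex.exp (ω * z), Complex.exp (ω ^ 2 * z), Complex.exp z;
        Complex.exp (2 * ω * z), Complex.exp (2 * ω ^ 2 * z), Complex.exp (2 * z)]
      = -4 * Complex.I * Complex.sin ((Real.sqrt 3 : ℂ) * z / 2)
          * (Complex.cosh (3 * z / 2) - Complex.cos ((Real.sqrt 3 : ℂ) * z / 2)) := by
  have hω' : ω = -1/2 + ((Real.sqrt 3 : ℂ) * Complex.I)/2 := by
    rw [hω, show (2 * Real.pi * Complex.I / 3 : ℂ) = ((2*Real.pi/3 : ℝ) : ℂ) * Complex.I by push_cast; ring,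
      Complex.exp_mul_I, ← Complex.ofReal_cos, ← Complex.ofReal_sin,
      show 2*Real.pi/3 = Real.pi - Real.pi/3 by ring,
      Real.cos_pi_sub, Real.sin_pi_sub, Real.cos_pi_div_three, Real.sin_pi_div_three]
    push_cast; ring
  set t : ℂ := (Real.sqrt 3 : ℂ) * Complex.I with htdef
  have ht : t^2 = -3 := by
    rw [htdef, mul_pow, Complex.I_sq,
      show ((Real.sqrt 3 : ℝ):ℂ)^2 = ((Real.sqrt 3^2 : ℝ):ℂ) by push_cast; ring,
      Real.sq_sqrt (by norm_num : (3:ℝ) ≥ 0)]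
    norm_num
  set a : ℂ := Complex.exp (z/4) with hadef
  set c : ℂ := Complex.exp (t*z/4) with hcdef
  set b : ℂ := Complex.exp (-(z/4)) with hbdef
  set d : ℂ := Complex.exp (-(t*z/4)) with hddef
  have hab : a * b = 1 := by rw [hadef, hbdef, ← Complex.exp_add]; norm_num
  have hcd : c * d = 1 := by rw [hcdef, hddef, ← Complex.exp_add]; norm_num
  have key : ∀ m n p q : ℕ,
      Complex.exp ((m:ℂ)*(z/4) + (n:ℂ)*(t*z/4) + (p:ℂ)*(-(z/4)) + (q:ℂ)*(-(t*z/4)))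
        = a^m * c^n * b^p * d^q := by
    intro m n p q
    rw [Complex.exp_add, Complex.exp_add, Complex.exp_add,
      Complex.exp_nat_mul, Complex.exp_nat_mul, Complex.exp_nat_mul, Complex.exp_nat_mul]
  have e1 : Complex.exp (ω*z) = a^0 * c^2 * b^2 * d^0 := by
    rw [show ω*z = ((0:ℕ):ℂ)*(z/4) + ((2:ℕ):ℂ)*(t*z/4) + ((2:ℕ):ℂ)*(-(z/4)) + ((0:ℕ):ℂ)*(-(t*z/4)) by
      push_cast; rw [hω']; ring]
    exact key _ _ _ _
  have e2 : Complex.exp (ω^2*z) = a^0 * c^0 * b^2 * d^2 := by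
    rw [show ω^2*z = ((0:ℕ):ℂ)*(z/4) + ((0:ℕ):ℂ)*(t*z/4) + ((2:ℕ):ℂ)*(-(z/4)) + ((2:ℕ):ℂ)*(-(t*z/4)) by
      push_cast; rw [hω']; linear_combination (z/4)*ht]
    exact key _ _ _ _
  have e3 : Complex.exp z = a^4 * c^0 * b^0 * d^0 := by
    rw [show z = ((4:ℕ):ℂ)*(z/4) + ((0:ℕ):ℂ)*(t*z/4) + ((0:ℕ):ℂ)*(-(z/4)) + ((0:ℕ):ℂ)*(-(t*z/4)) by
      push_cast; ring]
    exact key _ _ _ _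
  have e4 : Complex.exp (2*ω*z) = a^0 * c^4 * b^4 * d^0 := by
    rw [show 2*ω*z = ((0:ℕ):ℂ)*(z/4) + ((4:ℕ):ℂ)*(t*z/4) + ((4:ℕ):ℂ)*(-(z/4)) + ((0:ℕ):ℂ)*(-(t*z/4)) by
      push_cast; rw [hω']; ring]
    exact key _ _ _ _
  have e5 : Complex.exp (2*ω^2*z) = a^0 * c^0 * b^4 * d^4 := by
    rw [show 2*ω^2*z = ((0:ℕ):ℂ)*(z/4) + ((0:ℕ):ℂ)*(t*z/4) + ((4:ℕ):ℂ)*(-(z/4)) + ((4:ℕ):ℂ)*(-(t*z/4)) by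
      push_cast; rw [hω']; linear_combination (z/2)*ht]
    exact key _ _ _ _
  have e6 : Complex.exp (2*z) = a^8 * c^0 * b^0 * d^0 := by
    rw [show 2*z = ((8:ℕ):ℂ)*(z/4) + ((0:ℕ):ℂ)*(t*z/4) + ((0:ℕ):ℂ)*(-(z/4)) + ((0:ℕ):ℂ)*(-(t*z/4)) by
      push_cast; ring]
    exact key _ _ _ _
  have f1 : Complex.exp ((Real.sqrt 3 : ℂ) * z / 2 * Complex.I) = a^0 * c^2 * b^0 * d^0 := by
    rw [show (Real.sqrt 3 : ℂ) * z / 2 * Complex.I = ((0:ℕ):ℂ)*(z/4) + ((2:ℕ):ℂ)*(t*z/4) + ((0:ℕ):ℂ)*(-(z/4)) + ((0:ℕ):ℂ)*(-(t*z/4)) by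
      push_cast; rw [htdef]; ring]
    exact key _ _ _ _
  have f2 : Complex.exp (-((Real.sqrt 3 : ℂ) * z / 2 * Complex.I)) = a^0 * c^0 * b^0 * d^2 := by
    rw [show -((Real.sqrt 3 : ℂ) * z / 2 * Complex.I) = ((0:ℕ):ℂ)*(z/4) + ((0:ℕ):ℂ)*(t*z/4) + ((0:ℕ):ℂ)*(-(z/4)) + ((2:ℕ):ℂ)*(-(t*z/4)) by
      push_cast; rw [htdef]; ring]
    exact key _ _ _ _
  have f3 : Complex.exp ((Real.sqrt 3 : ℂ) * ω * z / 2 * Complex.I) = a^0 * c^0 * b^3 * d^1 := by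
    rw [show (Real.sqrt 3 : ℂ) * ω * z / 2 * Complex.I = ((0:ℕ):ℂ)*(z/4) + ((0:ℕ):ℂ)*(t*z/4) + ((3:ℕ):ℂ)*(-(z/4)) + ((1:ℕ):ℂ)*(-(t*z/4)) by
      push_cast; rw [hω', htdef]; linear_combination (z/4)*ht]
    exact key _ _ _ _
  have f4 : Complex.exp (-((Real.sqrt 3 : ℂ) * ω * z / 2 * Complex.I)) = a^3 * c^1 * b^0 * d^0 := by
    rw [show -((Real.sqrt 3 : ℂ) * ω * z / 2 * Complex.I) = ((3:ℕ):ℂ)*(z/4) + ((1:ℕ):ℂ)*(t*z/4) + ((0:ℕ):ℂ)*(-(z/4)) + ((0:ℕ):ℂ)*(-(t*z/4)) by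
      push_cast; rw [hω', htdef]; linear_combination (-z/4)*ht]
    exact key _ _ _ _
  have f5 : Complex.exp ((Real.sqrt 3 : ℂ) * ω^2 * z / 2 * Complex.I) = a^3 * c^0 * b^0 * d^1 := by
    rw [show (Real.sqrt 3 : ℂ) * ω^2 * z / 2 * Complex.I = ((3:ℕ):ℂ)*(z/4) + ((0:ℕ):ℂ)*(t*z/4) + ((0:ℕ):ℂ)*(-(z/4)) + ((1:ℕ):ℂ)*(-(t*z/4)) by
      push_cast; rw [hω', htdef]; linear_combination ((Real.sqrt 3 : ℂ)*Complex.I*z/8 - z/4)*ht]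
    exact key _ _ _ _
  have f6 : Complex.exp (-((Real.sqrt 3 : ℂ) * ω^2 * z / 2 * Complex.I)) = a^0 * c^1 * b^3 * d^0 := by
    rw [show -((Real.sqrt 3 : ℂ) * ω^2 * z / 2 * Complex.I) = ((0:ℕ):ℂ)*(z/4) + ((1:ℕ):ℂ)*(t*z/4) + ((3:ℕ):ℂ)*(-(z/4)) + ((0:ℕ):ℂ)*(-(t*z/4)) by
      push_cast; rw [hω', htdef]; linear_combination (-(Real.sqrt 3 : ℂ)*Complex.I*z/8 + z/4)*ht]
    exact key _ _ _ _
  have g1 : Complex.exp (3*z/2) = a^6 * c^0 * b^0 * d^0 := by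
    rw [show (3*z/2 : ℂ) = ((6:ℕ):ℂ)*(z/4) + ((0:ℕ):ℂ)*(t*z/4) + ((0:ℕ):ℂ)*(-(z/4)) + ((0:ℕ):ℂ)*(-(t*z/4)) by
      push_cast; ring]
    exact key _ _ _ _
  have g2 : Complex.exp (-(3*z/2)) = a^0 * c^0 * b^6 * d^0 := by
    rw [show (-(3*z/2) : ℂ) = ((0:ℕ):ℂ)*(z/4) + ((0:ℕ):ℂ)*(t*z/4) + ((6:ℕ):ℂ)*(-(z/4)) + ((0:ℕ):ℂ)*(-(t*z/4)) by
      push_cast; ring]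
    exact key _ _ _ _
  constructor
  · rw [sin3_aux]
    simp [Matrix.det_fin_three]
    rw [e1, e2, e3, e4, e5, e6, f1, f2, f3, f4, f5, f6]
    linear_combination (-(a^3*b^3*d^4) + a^3*b^3*c^4 + a^6*d^2 - a^6*c^2 + a^7*b*d^2 - a^7*b*c^2) * hab
      + (b^6*c*d^3 - b^6*c^3*d - a^6*d^2 + a^6*c^2) * hcd
  · rw [sincoshcos_aux]
    simp [Matrix.det_fin_three]
    rw [e1, e2, e3, e4, e5, e6, f1, f2, g1, g2]
    linear_combination (-(d^4) + c^4 - a*b*d^4 + a*b*c^4 - a^2*b^2*d^4 + a^2*b^2*c^4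
        - a^3*b^3*d^4 + a^3*b^3*c^4 + a^6*d^2 - a^6*c^2 + a^7*b*d^2 - a^7*b*c^2) * hab
      + (b^6*d^2 + b^6*c*d^3 - b^6*c^2 - b^6*c^3*d) * hcd
end

section
/- Let ω = e^{2πi/3} and let λ ∈ ℂ with Im λ ≥ 0 and |λ| > 1, z = λ^{1/3}, and assume that |(−λ)^{1/3} − 2πn/√3| > 1 for every integer n ≥ 1 (cube roots taken with argument in (−π/3, π/3]). Then |e^{(ω²−1)z} − 1| > 1/3. -/
open Complex

set_option maxHeartbeats 2000000 in
/-- Let `ω = e^{2πi/3}`, `λ` with `Im λ ≥ 0`, `|λ| > 1`, `z = λ^{1/3}`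
(principal cube root, argument in `(−π/3, π/3]`), and suppose
`|(−λ)^{1/3} − 2πn/√3| > 1` for every integer `n ≥ 1`.
Then `|e^{(ω²−1)z} − 1| > 1/3`. -/
theorem exp_omega_sq_sub_one_z_bound
    (ω lam : ℂ) (hω : ω = Complex.exp (2 * Real.pi * Complex.I / 3))
    (him : 0 ≤ lam.im) (habs : 1 < ‖lam‖)
    (hD : ∀ n : ℕ, 1 ≤ n →
      1 < ‖(-lam) ^ ((1:ℂ)/3) - ((2 * Real.pi * n / Real.sqrt 3 : ℝ) : ℂ)‖) :
    1/3 < ‖Complex.exp ((ω ^ 2 - 1) * lam ^ ((1:ℂ)/3)) - 1‖ := by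
  have pi_pos := Real.pi_pos
  have pi_lt : Real.pi < 3.15 := Real.pi_lt_d2
  have sqrt3_pos : (0:ℝ) < Real.sqrt 3 := Real.sqrt_pos.mpr (by norm_num)
  have sqrt3_sq : Real.sqrt 3 ^ 2 = 3 := Real.sq_sqrt (by norm_num)
  have hlam0 : lam ≠ 0 := by
    intro h; rw [h] at habs; simp at habs; linarith
  -- components of ω
  have hωre : ω.re = -(1/2) := by
    have h1 : (2 * (Real.pi:ℂ) * Complex.I / 3) = ((2*Real.pi/3 : ℝ) : ℂ) * Complex.I := by
      push_cast; ring
    rw [hω, h1, Complex.exp_re]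
    simp only [Complex.mul_re, Complex.mul_im, Complex.I_re, Complex.I_im,
      Complex.ofReal_re, Complex.ofReal_im, mul_one, mul_zero, zero_mul, sub_zero,
      add_zero, zero_sub, neg_zero, Real.exp_zero, one_mul]
    have h2 : (2*Real.pi/3 : ℝ) = Real.pi - Real.pi/3 := by ring
    rw [h2, Real.cos_pi_sub, Real.cos_pi_div_three]
  have hωim : ω.im = Real.sqrt 3 / 2 := by
    have h1 : (2 * (Real.pi:ℂ) * Complex.I / 3) = ((2*Real.pi/3 : ℝ) : ℂ) * Complex.I := by
      push_cast; ring
    rw [hω, h1, Complex.exp_im]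
    simp only [Complex.mul_re, Complex.mul_im, Complex.I_re, Complex.I_im,
      Complex.ofReal_re, Complex.ofReal_im, mul_one, mul_zero, zero_mul, sub_zero,
      add_zero, zero_sub, neg_zero, Real.exp_zero, one_mul]
    have h2 : (2*Real.pi/3 : ℝ) = Real.pi - Real.pi/3 := by ring
    rw [h2, Real.sin_pi_sub, Real.sin_pi_div_three]
  have hw2re : (ω^2 - 1).re = -(3/2) := by
    rw [sq, Complex.sub_re, Complex.mul_re, Complex.one_re, hωre, hωim]
    linear_combination (-(1:ℝ)/4) * sqrt3_sq
  have hw2im : (ω^2 - 1).im = -(Real.sqrt 3/2) := by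
    rw [sq, Complex.sub_im, Complex.mul_im, Complex.one_im, hωre, hωim]
    ring
  -- basic quantities
  set θ := Complex.arg lam with hθdef
  have hθ0 : 0 ≤ θ := Complex.arg_nonneg_iff.mpr him
  have hθπ : θ ≤ Real.pi := Complex.arg_le_pi lam
  set L := Real.log ‖lam‖ with hLdef
  have hL : 0 < L := Real.log_pos habs
  set R := Real.exp (L/3) with hRdef
  have hR1 : 1 < R := by
    rw [hRdef, show (1:ℝ) = Real.exp 0 from (Real.exp_zero).symm]
    exact Real.exp_lt_exp.mpr (by linarith)
  have hRpos : 0 < R := by linarith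
  set c := Real.cos (θ/3) with hcdef
  set s := Real.sin (θ/3) with hsdef
  have hcs : c^2 + s^2 = 1 := by rw [hcdef, hsdef]; exact Real.cos_sq_add_sin_sq _
  have hs0 : 0 ≤ s := Real.sin_nonneg_of_nonneg_of_le_pi (by linarith) (by linarith)
  have hchalf : 1/2 ≤ c := by
    rw [hcdef, show (1/2 : ℝ) = Real.cos (Real.pi/3) from by rw [Real.cos_pi_div_three]]
    exact Real.cos_le_cos_of_nonneg_of_le_pi (by linarith) (by linarith) (by linarith)
  -- z components
  set z := lam ^ ((1:ℂ)/3) with hzdef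
  have hz : z = Complex.exp (Complex.log lam * (1/3)) := Complex.cpow_def_of_ne_zero hlam0 _
  have hlre : (Complex.log lam * (1/3)).re = L/3 := by
    simp [Complex.mul_re, Complex.log_re, Complex.log_im]
    ring
  have hlim : (Complex.log lam * (1/3)).im = θ/3 := by
    simp [Complex.mul_im, Complex.log_re, Complex.log_im]
    ring
  have hzre : z.re = R * c := by rw [hz, Complex.exp_re, hlre, hlim]
  have hzim : z.im = R * s := by rw [hz, Complex.exp_im, hlre, hlim]
  -- w components
  set w := (ω^2 - 1) * z with hwdef
  set x := w.re with hxdef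
  set y := w.im with hydef
  have hx : x = R * (Real.sqrt 3/2 * s - 3/2 * c) := by
    rw [hxdef, hwdef, Complex.mul_re, hw2re, hw2im, hzre, hzim]; ring
  have hy : y = -(R * (Real.sqrt 3/2 * c + 3/2 * s)) := by
    rw [hydef, hwdef, Complex.mul_im, hw2re, hw2im, hzre, hzim]; ring
  have hx0 : x ≤ 0 := by
    have hco : 0 ≤ Real.cos (θ/3 + Real.pi/6) :=
      Real.cos_nonneg_of_mem_Icc ⟨by linarith, by linarith⟩
    rw [Real.cos_add, Real.cos_pi_div_six, Real.sin_pi_div_six, ← hcdef, ← hsdef] at hco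
    have hsc : s ≤ Real.sqrt 3 * c := by linarith
    have h3 : Real.sqrt 3 * (Real.sqrt 3 * c) = 3 * c := by
      linear_combination c * sqrt3_sq
    have h4 : Real.sqrt 3 * s ≤ 3 * c := by
      calc Real.sqrt 3 * s ≤ Real.sqrt 3 * (Real.sqrt 3 * c) :=
            mul_le_mul_of_nonneg_left hsc sqrt3_pos.le
      _ = 3 * c := h3
    rw [hx]
    linarith [mul_nonneg hRpos.le (show (0:ℝ) ≤ 3*c - Real.sqrt 3*s by linarith)]
  have hxy : x^2 + y^2 = 3 * R^2 := by
    rw [hx, hy]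
    linear_combination (R^2*(s^2+c^2)/4) * sqrt3_sq + (3*R^2) * hcs
  have hR3 : 3 < 3 * R^2 := by
    rw [sq]; linarith [mul_lt_mul'' hR1 hR1 zero_le_one zero_le_one]
  have habs1 : 1 - ‖Complex.exp w‖ ≤ ‖Complex.exp w - 1‖ := by
    have h := norm_sub_norm_le (1:ℂ) (Complex.exp w)
    rw [norm_sub_rev] at h
    simpa using h
  have hexp_half : Real.exp (-(1/2) : ℝ) < 2/3 := by
    have h := Real.add_one_lt_exp (x := (1/2:ℝ)) (by norm_num)
    have hp := Real.exp_pos (1/2:ℝ)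
    rw [Real.exp_neg, inv_lt_comm₀ hp (by norm_num)]
    norm_num
    linarith
  by_cases hcase : x ≤ -(1/2)
  · -- Case A
    have h1 : ‖Complex.exp w‖ = Real.exp x := by
      rw [Complex.norm_exp]
    have h2 : Real.exp x ≤ Real.exp (-(1/2):ℝ) := Real.exp_le_exp.mpr hcase
    rw [h1] at habs1
    linarith
  · -- Case B
    push_neg at hcase
    have hxsq : x^2 < 1/4 := by
      have h1 : (0:ℝ) ≤ -x := by linarith
      have h2 : -x < 1/2 := by linarith
      calc x^2 = (-x)*(-x) := by ring
      _ < (1/2)*(1/2) := mul_lt_mul'' h2 h2 h1 h1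
      _ = 1/4 := by norm_num
    have hθpos : 0 < θ := by
      rcases lt_or_eq_of_le hθ0 with h | h
      · exact h
      · exfalso
        have hc1 : c = 1 := by rw [hcdef, ← h]; simp
        have hs1 : s = 0 := by rw [hsdef, ← h]; simp
        rw [hx, hc1, hs1] at hcase
        have : R * (Real.sqrt 3/2*0 - 3/2*1) = -(3/2)*R := by ring
        linarith [hR1]
    have hargneg : Complex.arg (-lam) = θ - Real.pi := by
      rcases lt_or_eq_of_le him with h | h
      · exact Complex.arg_neg_eq_arg_sub_pi_of_im_pos h
      · have hre : lam = (lam.re : ℂ) := by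
          apply Complex.ext <;> simp [← h]
        have hreneg : lam.re < 0 := by
          rcases lt_trichotomy lam.re 0 with h1 | h1 | h1
          · exact h1
          · exfalso; apply hlam0; rw [hre, h1]; simp
          · exfalso
            have : θ = 0 := by
              rw [hθdef]; conv_lhs => rw [hre]
              exact Complex.arg_ofReal_of_nonneg h1.le
            linarith
        have h1 : θ = Real.pi := by
          rw [hθdef]; conv_lhs => rw [hre]
          exact Complex.arg_ofReal_of_neg hreneg
        have h2 : (-lam).arg = 0 := by
          rw [hre, ← Complex.ofReal_neg]
          exact Complex.arg_ofReal_of_nonneg (by linarith)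
        rw [h1, h2]; ring
    set ζ := (-lam) ^ ((1:ℂ)/3) with hζdef
    have hζ : ζ = Complex.exp (Complex.log (-lam) * (1/3)) :=
      Complex.cpow_def_of_ne_zero (neg_ne_zero.mpr hlam0) _
    have habsneg : ‖-lam‖ = ‖lam‖ := by simp
    have hlre' : (Complex.log (-lam) * (1/3)).re = L/3 := by
      simp [Complex.mul_re, Complex.log_re, Complex.log_im, habsneg, hLdef]
      ring
    have hlim' : (Complex.log (-lam) * (1/3)).im = θ/3 - Real.pi/3 := by
      simp [Complex.mul_im, Complex.log_re, Complex.log_im, hargneg]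
      ring
    have hζre : ζ.re = R * (c/2 + s * (Real.sqrt 3/2)) := by
      rw [hζ, Complex.exp_re, hlre', hlim', Real.cos_sub,
        Real.cos_pi_div_three, Real.sin_pi_div_three, ← hcdef, ← hsdef]
      ring
    have hζim : ζ.im = R * (s/2 - c * (Real.sqrt 3/2)) := by
      rw [hζ, Complex.exp_im, hlre', hlim', Real.sin_sub,
        Real.cos_pi_div_three, Real.sin_pi_div_three, ← hcdef, ← hsdef]
      ring
    have hxζ : x = Real.sqrt 3 * ζ.im := by
      rw [hx, hζim]; linear_combination (R*c/2) * sqrt3_sq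
    have hyζ : y = -(Real.sqrt 3 * ζ.re) := by
      rw [hy, hζre]; linear_combination (R*s/2) * sqrt3_sq
    -- key estimate
    have hkey : ∀ n : ℕ, 3 < x^2 + (y + 2*Real.pi*n)^2 := by
      intro n
      rcases Nat.eq_zero_or_pos n with h | h
      · subst h
        push_cast
        rw [mul_zero, add_zero]
        linarith [hxy, hR3]
      · have hd := hD n h
        have hsq : ‖ζ - ((2 * Real.pi * n / Real.sqrt 3 : ℝ) : ℂ)‖^2
            = (ζ.re - 2*Real.pi*n/Real.sqrt 3)^2 + ζ.im^2 := by
          rw [Complex.sq_norm, Complex.normSq_apply]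
          simp [Complex.sub_re, Complex.sub_im]
          ring
        have hd2 : 1 < (ζ.re - 2*Real.pi*(n:ℝ)/Real.sqrt 3)^2 + ζ.im^2 := by
          have h1 : (1:ℝ) < ‖ζ - ((2 * Real.pi * n / Real.sqrt 3 : ℝ) : ℂ)‖^2 :=
            one_lt_pow₀ hd (by norm_num)
          rw [hsq] at h1
          exact h1
        set Q := 2*Real.pi*(n:ℝ)/Real.sqrt 3 with hQdef
        have hq : Real.sqrt 3 * Q = 2*Real.pi*(n:ℝ) := by
          rw [hQdef]; field_simp
        have hE : x^2 + (y + 2*Real.pi*(n:ℝ))^2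
            = 3*((ζ.re - Q)^2 + ζ.im^2) := by
          rw [hxζ, hyζ]
          linear_combination (ζ.im^2 + ζ.re^2 + Q^2 - 2*ζ.re*Q) * sqrt3_sq
            + (2*Real.sqrt 3*ζ.re - Real.sqrt 3*Q - 2*Real.pi*(n:ℝ)) * hq
        rw [hE]
        linarith [hd2]
    have hyneg : y < 0 := by
      have h1 : 0 < Real.sqrt 3/2*c := mul_pos (by linarith) (by linarith)
      have h2 : 0 < R * (Real.sqrt 3/2*c + 3/2*s) := mul_pos hRpos (by linarith)
      rw [hy]; linarith
    -- round argument
    set k : ℤ := round (y / (2*Real.pi)) with hkdef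
    have hk1 : |y/(2*Real.pi) - k| ≤ 1/2 := abs_sub_round _
    have hk2 : |y - 2*Real.pi*k| ≤ Real.pi := by
      have h2 : (0:ℝ) < 2*Real.pi := by linarith
      have heq : y/(2*Real.pi) - k = (y - 2*Real.pi*k)/(2*Real.pi) := by field_simp
      rw [heq, abs_le] at hk1
      have h3 := (le_div_iff₀ h2).mp hk1.1
      have h4 := (div_le_iff₀ h2).mp hk1.2
      rw [abs_le]
      constructor <;> linarith
    have hkneg : k ≤ 0 := by
      have hlt : y / (2*Real.pi) + 1/2 < ((1:ℤ):ℝ) := by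
        push_cast
        have : y / (2*Real.pi) < 0 := div_neg_of_neg_of_pos hyneg (by linarith)
        linarith
      have hfl := Int.floor_lt.mpr hlt
      rw [hkdef, round_eq]
      omega
    have hmk : (((-k).toNat : ℕ) : ℝ) = -(k:ℝ) := by
      rw [show (((-k).toNat : ℕ) : ℝ) = (((-k).toNat : ℤ) : ℝ) from by push_cast; ring,
        Int.toNat_of_nonneg (by omega : (0:ℤ) ≤ -k)]
      push_cast; ring
    obtain ⟨t, htdef⟩ : ∃ t : ℝ, t = y - 2*Real.pi*(k:ℝ) := ⟨_, rfl⟩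
    have hk : 3 < x^2 + t^2 := by
      have h0 := hkey (-k).toNat
      rw [hmk] at h0
      have heq : y + 2*Real.pi*(-(k:ℝ)) = t := by rw [htdef]; ring
      rwa [heq] at h0
    have ht1 : |t| ≤ Real.pi := by rw [htdef]; exact hk2
    have ht2 : 11/4 < t^2 := by linarith [hk, hxsq]
    have ht3 : Real.pi/2 < |t| := by
      by_contra hcon
      push_neg at hcon
      have h1 : t^2 ≤ (Real.pi/2)^2 := by
        rw [← _root_.sq_abs t]
        exact pow_le_pow_left₀ (abs_nonneg t) hcon 2
      have hpp : Real.pi * Real.pi < 3.15 * 3.15 := mul_lt_mul'' pi_lt pi_lt pi_pos.le pi_pos.le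
      have h2 : (Real.pi/2)^2 < 11/4 := by rw [div_pow, sq]; linarith [hpp]
      linarith
    have hcosy : Real.cos y ≤ 0 := by
      have hyt : y = t + (k:ℝ) * (2*Real.pi) := by rw [htdef]; ring
      rw [hyt, Real.cos_add_int_mul_two_pi]
      rcases le_or_gt 0 t with h | h
      · have h1 : Real.pi/2 ≤ t := by rw [_root_.abs_of_nonneg h] at ht3; linarith
        have h2 : t ≤ Real.pi := by rw [_root_.abs_of_nonneg h] at ht1; linarith
        exact Real.cos_nonpos_of_pi_div_two_le_of_le h1 (by linarith)
      · rw [← Real.cos_neg]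
        have h1 : Real.pi/2 ≤ -t := by rw [_root_.abs_of_neg h] at ht3; linarith
        have h2 : -t ≤ Real.pi := by rw [_root_.abs_of_neg h] at ht1; linarith
        exact Real.cos_nonpos_of_pi_div_two_le_of_le h1 (by linarith)
    -- conclude
    have hre : (Complex.exp w - 1).re = Real.exp x * Real.cos y - 1 := by
      rw [Complex.sub_re, Complex.exp_re, Complex.one_re, hxdef, hydef]
    have hre' : (Complex.exp w - 1).re ≤ -1 := by
      rw [hre]
      have := mul_nonpos_of_nonneg_of_nonpos (Real.exp_pos x).le hcosy
      linarith
    have habs2 := Complex.abs_re_le_norm (Complex.exp w - 1)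
    have h1 : 1 ≤ |(Complex.exp w - 1).re| := by
      rw [abs_of_nonpos (by linarith)]
      linarith
    linarith
end

section
/- Let p ∈ H¹(𝕋), q ∈ L²(𝕋) be real-valued and 1-periodic, and let β be the function built from v = i p'/√3 + q as in the context. Then for every n ∈ ℕ, at the unperturbed eigenvalue μ_n^o = (2πn/√3)³ one has β(μ_n^o) = 2i·(−1)^{n+1}·e^{√3πn}·(1 − (−1)ⁿ e^{−√3πn})²·Im(ω v̂_n), where v̂_n = ∫₀¹ e^{−2πi n s} v(s) ds. -/
open MeasureTheory Complex Matrix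

/-- `ζ₁(x) = ∫ₓ² e^{i√3ω²z(x−s)} v ds + ω² ∫ₓ² e^{−i√3z(x−s)} v̄ ds`. -/
noncomputable def zeta1 (v : ℝ → ℂ) (z : ℂ) (x : ℝ) : ℂ :=
  (∫ s in x..(2:ℝ),
      Complex.exp (Complex.I * (Real.sqrt 3 : ℂ) * omg ^ 2 * z * ((x - s : ℝ) : ℂ)) * v s)
  + omg ^ 2 * ∫ s in x..(2:ℝ),
      Complex.exp (-(Complex.I * (Real.sqrt 3 : ℂ) * z * ((x - s : ℝ) : ℂ)))
        * (starRingEnd ℂ) (v s)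

/-- `ζ₂(x) = −ω ∫₀ˣ e^{i√3z(x−s)} v ds + ∫ₓ² e^{−i√3ωz(x−s)} v̄ ds`. -/
noncomputable def zeta2 (v : ℝ → ℂ) (z : ℂ) (x : ℝ) : ℂ :=
  -omg * (∫ s in (0:ℝ)..x,
      Complex.exp (Complex.I * (Real.sqrt 3 : ℂ) * z * ((x - s : ℝ) : ℂ)) * v s)
  + ∫ s in x..(2:ℝ),
      Complex.exp (-(Complex.I * (Real.sqrt 3 : ℂ) * omg * z * ((x - s : ℝ) : ℂ)))
        * (starRingEnd ℂ) (v s)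

/-- `ζ₃(x) = −ω² ∫₀ˣ e^{i√3ωz(x−s)} v ds − ω ∫₀ˣ e^{−i√3ω²z(x−s)} v̄ ds`. -/
noncomputable def zeta3 (v : ℝ → ℂ) (z : ℂ) (x : ℝ) : ℂ :=
  -omg ^ 2 * (∫ s in (0:ℝ)..x,
      Complex.exp (Complex.I * (Real.sqrt 3 : ℂ) * omg * z * ((x - s : ℝ) : ℂ)) * v s)
  - omg * ∫ s in (0:ℝ)..x,
      Complex.exp (-(Complex.I * (Real.sqrt 3 : ℂ) * omg ^ 2 * z * ((x - s : ℝ) : ℂ)))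
        * (starRingEnd ℂ) (v s)

/-- The function `β`, built from `v = i p'/√3 + q` via the `ζ_j` and the three
determinants; `z = λ^{1/3}` is the cube root with argument in `(−π/3, π/3]`. -/
noncomputable def betaF (v : ℝ → ℂ) (lam : ℂ) : ℂ :=
  Matrix.det !![zeta1 v (lam ^ ((1:ℂ)/3)) 0, 1, 1;
      zeta1 v (lam ^ ((1:ℂ)/3)) 1 * Complex.exp (omg * lam ^ ((1:ℂ)/3)),
        Complex.exp (omg ^ 2 * lam ^ ((1:ℂ)/3)), Complex.exp (lam ^ ((1:ℂ)/3));
      0, Complex.exp (2 * omg ^ 2 * lam ^ ((1:ℂ)/3)), Complex.exp (2 * lam ^ ((1:ℂ)/3))]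
  + Matrix.det !![1, zeta2 v (lam ^ ((1:ℂ)/3)) 0, 1;
      Complex.exp (omg * lam ^ ((1:ℂ)/3)),
        zeta2 v (lam ^ ((1:ℂ)/3)) 1 * Complex.exp (omg ^ 2 * lam ^ ((1:ℂ)/3)),
        Complex.exp (lam ^ ((1:ℂ)/3));
      Complex.exp (2 * omg * lam ^ ((1:ℂ)/3)),
        zeta2 v (lam ^ ((1:ℂ)/3)) 2 * Complex.exp (2 * omg ^ 2 * lam ^ ((1:ℂ)/3)),
        Complex.exp (2 * lam ^ ((1:ℂ)/3))]
  + Matrix.det !![1, 1, 0;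
      Complex.exp (omg * lam ^ ((1:ℂ)/3)), Complex.exp (omg ^ 2 * lam ^ ((1:ℂ)/3)),
        zeta3 v (lam ^ ((1:ℂ)/3)) 1 * Complex.exp (lam ^ ((1:ℂ)/3));
      Complex.exp (2 * omg * lam ^ ((1:ℂ)/3)), Complex.exp (2 * omg ^ 2 * lam ^ ((1:ℂ)/3)),
        zeta3 v (lam ^ ((1:ℂ)/3)) 2 * Complex.exp (2 * lam ^ ((1:ℂ)/3))]

private lemma myconj (f : ℝ → ℂ) (a b : ℝ) :
    (∫ s in a..b, (starRingEnd ℂ) (f s)) = (starRingEnd ℂ) (∫ s in a..b, f s) := by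
  rw [intervalIntegral, intervalIntegral, integral_conj, integral_conj, ← map_sub]

private lemma pullout (f : ℝ → ℂ) (A : ℂ) (x a b : ℝ) :
    (∫ s in a..b, Complex.exp (A * ((x - s : ℝ) : ℂ)) * f s)
      = Complex.exp (A * (x : ℂ)) * ∫ s in a..b, Complex.exp (-(A * (s : ℂ))) * f s := by
  rw [← intervalIntegral.integral_const_mul]
  apply intervalIntegral.integral_congr
  intro s hs
  dsimp only
  rw [show A * ((x - s : ℝ) : ℂ) = A * (x:ℂ) + -(A * (s:ℂ)) by push_cast; ring,
    Complex.exp_add, mul_assoc]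

private lemma shiftint (f : ℝ → ℂ) (hp : ∀ x, f (x + 1) = f x) (A : ℂ) :
    (∫ s in (1:ℝ)..2, Complex.exp (-(A * (s:ℂ))) * f s)
      = Complex.exp (-A) * ∫ s in (0:ℝ)..1, Complex.exp (-(A * (s:ℂ))) * f s := by
  have h := intervalIntegral.integral_comp_add_right
    (a := 0) (b := 1) (fun s : ℝ => Complex.exp (-(A * (s:ℂ))) * f s) 1
  norm_num at h
  rw [← h, ← intervalIntegral.integral_const_mul]
  apply intervalIntegral.integral_congr
  intro s hs
  simp only [hp s]
  rw [show -(A * ((s:ℂ) + 1)) = -A + -(A * (s:ℂ)) by ring, Complex.exp_add]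
  ring

private lemma splitint (f : ℝ → ℂ) (h1 : IntervalIntegrable f volume 0 1)
    (h2 : IntervalIntegrable f volume 1 2) (hp : ∀ x, f (x + 1) = f x) (A : ℂ) :
    (∫ s in (0:ℝ)..2, Complex.exp (-(A * (s:ℂ))) * f s)
      = (1 + Complex.exp (-A)) * ∫ s in (0:ℝ)..1, Complex.exp (-(A * (s:ℂ))) * f s := by
  have hc : Continuous (fun s : ℝ => Complex.exp (-(A * (s:ℂ)))) := by fun_prop
  have c1 : IntervalIntegrable (fun s : ℝ => Complex.exp (-(A * (s:ℂ))) * f s) volume 0 1 :=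
    h1.continuousOn_mul hc.continuousOn
  have c2 : IntervalIntegrable (fun s : ℝ => Complex.exp (-(A * (s:ℂ))) * f s) volume 1 2 :=
    h2.continuousOn_mul hc.continuousOn
  rw [← intervalIntegral.integral_add_adjacent_intervals c1 c2, shiftint f hp A]
  ring

private lemma det3key (z10 z11 z20 z21 z22 Z1 Z2 e E : ℂ) :
    Matrix.det !![z10, 1, 1; z11 * e, e, E; 0, e^2, E^2]
    + Matrix.det !![1, z20, 1; e, z21 * e, E; e^2, z22 * e^2, E^2]
    + Matrix.det !![1, 1, 0; e, e, Z1 * E; e^2, e^2, Z2 * E^2]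
    = e * (E - e) * (z10 * E - z11 * (E + e) + z21 * (E + e) - z22 * e - z20 * E) := by
  simp [Matrix.det_fin_three]
  ring


set_option maxHeartbeats 2000000 in
/-- For real-valued 1-periodic `p ∈ H¹(𝕋)`, `q ∈ L²(𝕋)` and
`v = i p'/√3 + q`, at the unperturbed eigenvalue `μ_n° = (2πn/√3)³` one has
`β(μ_n°) = 2i (−1)^{n+1} e^{√3πn} (1 − (−1)ⁿ e^{−√3πn})² Im(ω v̂_n)` with
`v̂_n = ∫₀¹ e^{−2πins} v(s) ds`. -/
theorem beta_at_unperturbed_eigenvalues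
    (p p' q : ℝ → ℝ)
    (hp : Function.Periodic p 1) (hp' : Function.Periodic p' 1)
    (hq : Function.Periodic q 1)
    (hpd : ∀ x : ℝ, p x = p 0 + ∫ t in (0:ℝ)..x, p' t)
    (hip : IntervalIntegrable p' volume 0 1) (hiq : IntervalIntegrable q volume 0 1)
    (hip2 : IntervalIntegrable (fun x => p' x ^ 2) volume 0 1)
    (hiq2 : IntervalIntegrable (fun x => q x ^ 2) volume 0 1)
    (v : ℝ → ℂ)
    (hv : ∀ x : ℝ, v x = Complex.I * (p' x : ℂ) / (Real.sqrt 3 : ℂ) + (q x : ℂ)) :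
    ∀ n : ℕ,
      betaF v ((((2 * Real.pi * n / Real.sqrt 3) ^ 3 : ℝ)) : ℂ)
        = 2 * Complex.I * (-1) ^ (n + 1)
            * ((Real.exp (Real.sqrt 3 * Real.pi * n) : ℝ) : ℂ)
            * (((1 - (-1 : ℝ) ^ n * Real.exp (-(Real.sqrt 3 * Real.pi * n)) : ℝ)) : ℂ) ^ 2
            * ((((omg * ∫ s in (0:ℝ)..1,
                  Complex.exp (-(((2 * Real.pi * n * s : ℝ)) : ℂ) * Complex.I) * v s).im : ℝ)) : ℂ) := by
  intro n
  -- basic real facts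
  have hs3 : Real.sqrt 3 * Real.sqrt 3 = 3 := Real.mul_self_sqrt (by norm_num)
  have hs3pos : (0:ℝ) < Real.sqrt 3 := Real.sqrt_pos.mpr (by norm_num)
  have h3c : ((Real.sqrt 3 : ℝ) : ℂ)^2 = 3 := by
    rw [← Complex.ofReal_pow]; norm_cast; rw [sq]; exact hs3
  set u : ℝ := Real.exp (Real.sqrt 3 * Real.pi * (n:ℝ) / 3) with hu_def
  have hupos : (0:ℝ) < u := Real.exp_pos _
  have hune : ((u:ℝ):ℂ) ≠ 0 := Complex.ofReal_ne_zero.mpr hupos.ne'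
  have hr3 : Real.exp (Real.sqrt 3 * Real.pi * (n:ℝ)) = u^3 := by
    rw [show Real.sqrt 3 * Real.pi * (n:ℝ)
        = Real.sqrt 3 * Real.pi * (n:ℝ)/3 + Real.sqrt 3 * Real.pi * (n:ℝ)/3
          + Real.sqrt 3 * Real.pi * (n:ℝ)/3 by ring, Real.exp_add, Real.exp_add, ← hu_def]
    ring
  have hrr : (2 * Real.pi * (n:ℝ) / Real.sqrt 3) = 2 * Real.sqrt 3 * Real.pi * (n:ℝ) / 3 := by
    field_simp [hune]
    linear_combination (-(n:ℝ)) * hs3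
  -- omega facts
  have homg : omg = -(1/2 : ℂ) + ((Real.sqrt 3 : ℝ) : ℂ)/2 * Complex.I := by
    unfold omg
    rw [show (2*(Real.pi:ℂ)*Complex.I/3) = ((2*Real.pi/3 : ℝ) : ℂ) * Complex.I by push_cast; ring,
      Complex.exp_mul_I, ← Complex.ofReal_cos, ← Complex.ofReal_sin,
      show (2*Real.pi/3 : ℝ) = Real.pi - Real.pi/3 by ring, Real.cos_pi_sub, Real.sin_pi_sub,
      Real.cos_pi_div_three, Real.sin_pi_div_three]
    push_cast; ring
  have ho2 : omg^2 = -(1/2 : ℂ) - ((Real.sqrt 3 : ℝ) : ℂ)/2 * Complex.I := by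
    rw [homg]
    linear_combination (Complex.I^2/4)*h3c + (3/4)*Complex.I_sq
  have hoc : (starRingEnd ℂ) omg = -(1/2 : ℂ) - ((Real.sqrt 3 : ℝ) : ℂ)/2 * Complex.I := by
    rw [homg]
    simp [map_add, map_neg, _root_.map_mul, map_div₀, map_ofNat, Complex.conj_I, Complex.conj_ofReal]
    ring
  have homgc : (starRingEnd ℂ) omg = omg^2 := by rw [hoc, ho2]
  -- the constants
  set zc : ℂ := ((2 * Real.sqrt 3 * Real.pi * (n:ℝ) / 3 : ℝ) : ℂ) with hzc
  set cC : ℂ := ((Real.sqrt 3 * Real.pi * (n:ℝ) : ℝ) : ℂ) - ((Real.pi * (n:ℝ) : ℝ) : ℂ) * Complex.I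
    with hcdef
  set dC : ℂ := ((Real.sqrt 3 * Real.pi * (n:ℝ) : ℝ) : ℂ) + ((Real.pi * (n:ℝ) : ℝ) : ℂ) * Complex.I
    with hddef
  set gC : ℂ := ((2 * Real.pi * (n:ℝ) : ℝ) : ℂ) * Complex.I with hgdef
  have hA1 : Complex.I * (Real.sqrt 3 : ℂ) * omg^2 * zc = cC := by
    rw [hcdef, hzc, ho2]; push_cast
    linear_combination (-(Real.pi*(n:ℂ)*Complex.I)/3 - ((Real.sqrt 3:ℝ):ℂ)*Real.pi*(n:ℂ)*Complex.I^2/3) * h3c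
      + (-(((Real.sqrt 3:ℝ):ℂ)*Real.pi*(n:ℂ))) * Complex.I_sq
  have hA2 : Complex.I * (Real.sqrt 3 : ℂ) * zc = gC := by
    rw [hgdef, hzc]; push_cast
    linear_combination (2*Real.pi*(n:ℂ)*Complex.I/3) * h3c
  have hA3 : Complex.I * (Real.sqrt 3 : ℂ) * omg * zc = -dC := by
    rw [hddef, hzc, homg]; push_cast
    linear_combination (-Real.pi*(n:ℂ)*Complex.I/3 + ((Real.sqrt 3:ℝ):ℂ)*Real.pi*(n:ℂ)*Complex.I^2/3) * h3c
      + (((Real.sqrt 3:ℝ):ℂ)*Real.pi*(n:ℂ)) * Complex.I_sq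
  have hB2 : ∀ w : ℂ, -(Complex.I * (Real.sqrt 3 : ℂ) * zc * w) = -gC * w := by
    intro w; rw [hA2, neg_mul]
  have hB3 : ∀ w : ℂ, -(Complex.I * (Real.sqrt 3 : ℂ) * omg * zc * w) = dC * w := by
    intro w; rw [hA3, neg_mul, neg_neg]
  -- exponential values
  have hpin : Complex.exp (((Real.pi * (n:ℝ) : ℝ) : ℂ) * Complex.I) = (-1:ℂ)^n := by
    rw [show (((Real.pi * (n:ℝ) : ℝ) : ℂ) * Complex.I)
        = (n:ℂ) * (((Real.pi:ℝ):ℂ) * Complex.I) by push_cast; ring,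
      Complex.exp_nat_mul, Complex.exp_pi_mul_I]
  have hpin' : Complex.exp (-(((Real.pi * (n:ℝ) : ℝ) : ℂ) * Complex.I)) = (-1:ℂ)^n := by
    rw [Complex.exp_neg, hpin, ← inv_pow]; norm_num
  have hec : Complex.exp (-cC) = (-1:ℂ)^n * (((u:ℝ):ℂ)^3)⁻¹ := by
    rw [hcdef, show -((((Real.sqrt 3 * Real.pi * (n:ℝ) : ℝ)) : ℂ) - ((Real.pi * (n:ℝ) : ℝ) : ℂ) * Complex.I)
        = (((-(Real.sqrt 3 * Real.pi * (n:ℝ)) : ℝ)) : ℂ) + ((Real.pi * (n:ℝ) : ℝ) : ℂ) * Complex.I by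
          push_cast; ring,
      Complex.exp_add, hpin, ← Complex.ofReal_exp, Real.exp_neg, hr3]
    push_cast; ring
  have heC : Complex.exp cC = (-1:ℂ)^n * ((u:ℝ):ℂ)^3 := by
    rw [hcdef, show (((Real.sqrt 3 * Real.pi * (n:ℝ) : ℝ)) : ℂ) - ((Real.pi * (n:ℝ) : ℝ) : ℂ) * Complex.I
        = (((Real.sqrt 3 * Real.pi * (n:ℝ) : ℝ)) : ℂ) + -(((Real.pi * (n:ℝ) : ℝ) : ℂ) * Complex.I) by ring,
      Complex.exp_add, hpin', ← Complex.ofReal_exp, hr3]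
    push_cast; ring
  have hed : Complex.exp (-dC) = (-1:ℂ)^n * (((u:ℝ):ℂ)^3)⁻¹ := by
    rw [hddef, show -((((Real.sqrt 3 * Real.pi * (n:ℝ) : ℝ)) : ℂ) + ((Real.pi * (n:ℝ) : ℝ) : ℂ) * Complex.I)
        = (((-(Real.sqrt 3 * Real.pi * (n:ℝ)) : ℝ)) : ℂ) + -(((Real.pi * (n:ℝ) : ℝ) : ℂ) * Complex.I) by
          push_cast; ring,
      Complex.exp_add, hpin', ← Complex.ofReal_exp, Real.exp_neg, hr3]
    push_cast; ring
  have heD : Complex.exp dC = (-1:ℂ)^n * ((u:ℝ):ℂ)^3 := by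
    rw [hddef, Complex.exp_add, hpin, ← Complex.ofReal_exp, hr3]
    push_cast; ring
  have heg' : Complex.exp gC = 1 := by
    rw [hgdef, show (((2 * Real.pi * (n:ℝ) : ℝ)) : ℂ) * Complex.I
        = (n:ℂ) * (2 * ((Real.pi:ℝ):ℂ) * Complex.I) by push_cast; ring,
      Complex.exp_nat_mul, Complex.exp_two_pi_mul_I, one_pow]
  have heg : Complex.exp (-gC) = 1 := by rw [Complex.exp_neg, heg']; norm_num
  have heg2 : Complex.exp (gC * 2) = 1 := by
    rw [hgdef, show (((2 * Real.pi * (n:ℝ) : ℝ)) : ℂ) * Complex.I * 2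
        = ((2*n : ℕ):ℂ) * (2 * ((Real.pi:ℝ):ℂ) * Complex.I) by push_cast; ring,
      Complex.exp_nat_mul, Complex.exp_two_pi_mul_I, one_pow]
  have hEw : Complex.exp (omg * zc) = (-1:ℂ)^n * ((u:ℝ):ℂ)⁻¹ := by
    have harg : omg * zc = (((-(Real.sqrt 3 * Real.pi * (n:ℝ)/3) : ℝ)) : ℂ)
        + ((Real.pi * (n:ℝ) : ℝ) : ℂ) * Complex.I := by
      rw [homg, hzc]; push_cast
      linear_combination (Real.pi*(n:ℂ)*Complex.I/3) * h3c
    rw [harg, Complex.exp_add, hpin, ← Complex.ofReal_exp, Real.exp_neg, ← hu_def]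
    push_cast; ring
  have hEw2 : Complex.exp (omg^2 * zc) = (-1:ℂ)^n * ((u:ℝ):ℂ)⁻¹ := by
    have harg : omg^2 * zc = (((-(Real.sqrt 3 * Real.pi * (n:ℝ)/3) : ℝ)) : ℂ)
        + -(((Real.pi * (n:ℝ) : ℝ) : ℂ) * Complex.I) := by
      rw [ho2, hzc]; push_cast
      linear_combination (-Real.pi*(n:ℂ)*Complex.I/3) * h3c
    rw [harg, Complex.exp_add, hpin', ← Complex.ofReal_exp, Real.exp_neg, ← hu_def]
    push_cast; ring
  have hEz : Complex.exp zc = ((u:ℝ):ℂ)^2 := by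
    rw [hzc, ← Complex.ofReal_exp,
      show 2 * Real.sqrt 3 * Real.pi * (n:ℝ) / 3
        = Real.sqrt 3 * Real.pi * (n:ℝ)/3 + Real.sqrt 3 * Real.pi * (n:ℝ)/3 by ring,
      Real.exp_add, ← hu_def]
    push_cast; ring
  have hE2z : Complex.exp (2 * zc) = (((u:ℝ):ℂ)^2)^2 := by
    rw [show (2:ℂ) * zc = zc + zc by ring, Complex.exp_add, hEz]; ring
  have hE2w : Complex.exp (2 * omg * zc) = ((-1:ℂ)^n * ((u:ℝ):ℂ)⁻¹)^2 := by
    rw [show (2:ℂ) * omg * zc = omg * zc + omg * zc by ring, Complex.exp_add, hEw]; ring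
  have hE2w2 : Complex.exp (2 * omg^2 * zc) = ((-1:ℂ)^n * ((u:ℝ):ℂ)⁻¹)^2 := by
    rw [show (2:ℂ) * omg^2 * zc = omg^2 * zc + omg^2 * zc by ring, Complex.exp_add, hEw2]; ring

  -- cube root
  have hz : ((((2 * Real.pi * (n:ℝ) / Real.sqrt 3) ^ 3 : ℝ)) : ℂ) ^ ((1:ℂ)/3) = zc := by
    rw [show ((1:ℂ)/3) = ((1/3 : ℝ) : ℂ) by norm_num,
      ← Complex.ofReal_cpow (by positivity) (1/3), hzc, ← hrr]
    congr 1
    rw [← Real.rpow_natCast (2 * Real.pi * (n:ℝ) / Real.sqrt 3) 3,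
      ← Real.rpow_mul (by positivity)]
    norm_num
  -- periodicity and integrability
  have hvper : ∀ x, v (x + 1) = v x := fun x => by rw [hv, hv, hp' x, hq x]
  have hcvper : ∀ x, (starRingEnd ℂ) (v (x + 1)) = (starRingEnd ℂ) (v x) := fun x => by
    rw [hvper]
  have hipC : IntervalIntegrable (fun x => ((p' x : ℝ) : ℂ)) volume 0 1 :=
    ⟨hip.1.ofReal, hip.2.ofReal⟩
  have hiqC : IntervalIntegrable (fun x => ((q x : ℝ) : ℂ)) volume 0 1 :=
    ⟨hiq.1.ofReal, hiq.2.ofReal⟩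
  have hv01 : IntervalIntegrable v volume 0 1 := by
    have hveq : v = fun x => (Complex.I/(Real.sqrt 3:ℂ)) * ((p' x : ℝ):ℂ) + ((q x : ℝ):ℂ) :=
      funext fun x => by rw [hv x]; ring
    rw [hveq]; exact (hipC.const_mul _).add hiqC
  have hv12 : IntervalIntegrable v volume 1 2 := by
    have h := hv01.comp_sub_right 1
    norm_num at h
    rwa [show (fun x => v (x - 1)) = v from funext fun x => by
      rw [← hvper (x - 1), sub_add_cancel]] at h
  have hcv01 : IntervalIntegrable (fun x => (starRingEnd ℂ) (v x)) volume 0 1 := by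
    have hcveq : (fun x => (starRingEnd ℂ) (v x))
        = fun x => (-Complex.I/(Real.sqrt 3:ℂ)) * ((p' x : ℝ):ℂ) + ((q x : ℝ):ℂ) :=
      funext fun x => by
        rw [hv x]
        simp [map_add, _root_.map_mul, map_div₀, Complex.conj_I, Complex.conj_ofReal]
        ring
    rw [hcveq]; exact (hipC.const_mul _).add hiqC
  have hcv12 : IntervalIntegrable (fun x => (starRingEnd ℂ) (v x)) volume 1 2 := by
    have h := hcv01.comp_sub_right 1
    norm_num at h
    rwa [show (fun x => (starRingEnd ℂ) (v (x - 1))) = fun x => (starRingEnd ℂ) (v x) from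
      funext fun x => by rw [← hvper (x - 1), sub_add_cancel]] at h
  -- conjugate integral
  have hQ : (∫ s in (0:ℝ)..1, Complex.exp (-(-gC * (s:ℂ))) * (starRingEnd ℂ) (v s))
      = (starRingEnd ℂ) (∫ s in (0:ℝ)..1, Complex.exp (-(gC * (s:ℂ))) * v s) := by
    rw [← myconj]
    apply intervalIntegral.integral_congr
    intro s _
    dsimp only
    rw [_root_.map_mul, ← Complex.exp_conj]
    congr 1
    simp [hgdef, _root_.map_mul, map_neg, map_ofNat, Complex.conj_I, Complex.conj_ofReal]
  have hwW : (∫ s in (0:ℝ)..1,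
        Complex.exp (-(((2 * Real.pi * (n:ℝ) * s : ℝ)) : ℂ) * Complex.I) * v s)
      = ∫ s in (0:ℝ)..1, Complex.exp (-(gC * (s:ℂ))) * v s := by
    apply intervalIntegral.integral_congr
    intro s _
    dsimp only
    rw [show -(((2 * Real.pi * (n:ℝ) * s : ℝ)) : ℂ) * Complex.I = -(gC * (s:ℂ)) by
      rw [hgdef]; push_cast; ring]
  -- rewrite the right-hand side
  have hRHS : (2 * Complex.I * (-1:ℂ) ^ (n + 1)
        * ((Real.exp (Real.sqrt 3 * Real.pi * n) : ℝ) : ℂ)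
        * (((1 - (-1 : ℝ) ^ n * Real.exp (-(Real.sqrt 3 * Real.pi * n)) : ℝ)) : ℂ) ^ 2
        * ((((omg * ∫ s in (0:ℝ)..1,
              Complex.exp (-(((2 * Real.pi * n * s : ℝ)) : ℂ) * Complex.I) * v s).im : ℝ)) : ℂ))
      = -((-1:ℂ)^n) * ((u:ℝ):ℂ)^3 * (1 - ((-1:ℂ)^n) * (((u:ℝ):ℂ)^3)⁻¹)^2
        * (omg * (∫ s in (0:ℝ)..1, Complex.exp (-(gC * (s:ℂ))) * v s)
            - omg^2 * (starRingEnd ℂ) (∫ s in (0:ℝ)..1, Complex.exp (-(gC * (s:ℂ))) * v s)) := by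
    rw [hwW]
    have h2 := Complex.sub_conj (omg * (∫ s in (0:ℝ)..1, Complex.exp (-(gC * (s:ℂ))) * v s))
    rw [_root_.map_mul, homgc] at h2
    push_cast at h2
    rw [Real.exp_neg, hr3]
    push_cast
    linear_combination ((-1:ℂ)^n * ((u:ℝ):ℂ)^3
      * (1 - ((-1:ℂ)^n) * (((u:ℝ):ℂ)^3)⁻¹)^2) * h2
  rw [hRHS]
  simp only [betaF]
  rw [hz]
  simp only [zeta1, zeta2]
  simp only [hB2, hB3]
  simp only [hA1, hA2]
  simp only [pullout]
  simp only [Complex.ofReal_zero, mul_zero, Complex.exp_zero, one_mul, Complex.ofReal_one,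
    mul_one, Complex.ofReal_ofNat, intervalIntegral.integral_same]
  simp only [splitint v hv01 hv12 hvper,
    splitint (fun x => (starRingEnd ℂ) (v x)) hcv01 hcv12 hcvper,
    shiftint v hvper, shiftint (fun x => (starRingEnd ℂ) (v x)) hcvper]
  simp only [neg_neg, hec, heC, hed, heD, heg, heg', heg2, hEw, hEw2, hEz, hE2w, hE2w2, hE2z, hQ]
  rw [det3key]
  generalize (∫ s in (0:ℝ)..1, Complex.exp (-(cC * (s:ℂ))) * v s) = P
  generalize (∫ s in (0:ℝ)..1, Complex.exp (-(dC * (s:ℂ))) * (starRingEnd ℂ) (v s)) = Pb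
  generalize (∫ s in (0:ℝ)..1, Complex.exp (-(gC * (s:ℂ))) * v s) = W
  have hune' := hune
  generalize hU : ((u:ℝ):ℂ) = U at hune' ⊢
  rcases Nat.even_or_odd n with he | ho
  · simp only [he.neg_one_pow]
    field_simp [hune']
    ring
  · simp only [ho.neg_one_pow]
    field_simp [hune']
    ring
end
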